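/- arXiv:1606.07731 — 8 statements merged into one kernel-verified Lean document; each statement's English description precedes it below -/
import Mathlib

section
/- Let s ∈ ℂ with Re s > 0, and let z : ℝ → ℂ be measurable with ∫_0^∞ |z(t)|² dt < ∞ and z = 0 almost everywhere on (−∞,0). Assume that for every h ≥ 0 one has z(t+h) = e^{−sh}·z(t) for almost every t ≥ 0. Then there exists a unique a ∈ ℂ such that z(t) = a·e^{−st} for almost every t ≥ 0. -/
open MeasureTheory

lemma exists_ge_of_ae (M : ℝ) (P : ℝ → Prop) (h : ∀ᵐ u ∂volume, P u) :
    ∃ u, M ≤ u ∧ P u := by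
  by_contra hc
  push_neg at hc
  have h0 : volume {u : ℝ | ¬ P u} = 0 := ae_iff.mp h
  have h1 : volume (Set.Ici M) = 0 :=
    measure_mono_null (fun u hu => hc u hu) h0
  simp [Real.volume_Ici] at h1

/-- Let `Re s > 0` and let `z : ℝ → ℂ` be measurable, square integrable
on `(0,∞)`, vanishing a.e. on `(-∞,0)`, and such that for every `h ≥ 0`,
`z(t+h) = e^{-sh} z(t)` for a.e. `t ≥ 0`.  Then there is a unique `a ∈ ℂ` with
`z(t) = a e^{-st}` for a.e. `t ≥ 0`. -/
theorem statement6 (s : ℂ) (hs : 0 < s.re) (z : ℝ → ℂ) (hz : Measurable z)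
    (hz2 : IntegrableOn (fun t => ‖z t‖ ^ 2) (Set.Ioi (0 : ℝ)) volume)
    (hz0 : ∀ᵐ t ∂volume, t < 0 → z t = 0)
    (hshift : ∀ h : ℝ, 0 ≤ h →
      ∀ᵐ t ∂volume, 0 ≤ t → z (t + h) = Complex.exp (-(s * (h : ℂ))) * z t) :
    ∃! a : ℂ, ∀ᵐ t ∂volume, 0 ≤ t → z t = a * Complex.exp (-(s * (t : ℂ))) := by
  set w : ℝ → ℂ := fun t => Complex.exp (s * t) * z t with hwdef
  have hwm : Measurable w :=
    (Complex.measurable_exp.comp (measurable_const.mul Complex.measurable_ofReal)).mul hz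
  -- the shift property for w
  have hwshift : ∀ h : ℝ, 0 ≤ h → ∀ᵐ t ∂volume, 0 ≤ t → w (t + h) = w t := by
    intro h hh
    filter_upwards [hshift h hh] with t ht htpos
    simp only [hwdef]
    rw [ht htpos, show ((t + h : ℝ) : ℂ) = (t : ℂ) + (h : ℂ) by push_cast; ring,
      mul_add, Complex.exp_add, Complex.exp_neg]
    field_simp
  -- the bad set in the product space (first coordinate = h, second = t)
  set A : Set (ℝ × ℝ) := {p | 0 ≤ p.1 ∧ 0 ≤ p.2 ∧ w (p.2 + p.1) ≠ w p.2} with hAdef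
  have hAm : MeasurableSet A := by
    apply MeasurableSet.inter
    · exact measurableSet_le measurable_const measurable_fst
    apply MeasurableSet.inter
    · exact measurableSet_le measurable_const measurable_snd
    · exact (measurableSet_eq_fun (hwm.comp (measurable_snd.add measurable_fst))
        (hwm.comp measurable_snd)).compl
  have hAnull : (volume.prod volume) A = 0 := by
    rw [Measure.measure_prod_null hAm]
    refine Filter.Eventually.of_forall (fun h => ?_)
    rcases le_or_gt 0 h with hh | hh
    · have := ae_iff.mp (hwshift h hh)
      refine measure_mono_null (fun t ht => ?_) this
      simp only [Set.mem_preimage, hAdef, Set.mem_setOf_eq] at ht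
      simp only [Set.mem_setOf_eq]
      exact fun H => ht.2.2 (H ht.2.1)
    · have hempty : Prod.mk h ⁻¹' A = ∅ := by
        ext t
        simp only [Set.mem_preimage, hAdef, Set.mem_setOf_eq, Set.mem_empty_iff_false, iff_false]
        exact fun H => absurd H.1 (not_le.mpr hh)
      simp [hempty]
  -- swap: the bad set with first coordinate = t
  have hA'null : (volume.prod volume) (Prod.swap ⁻¹' A) = 0 := by
    rw [Measure.measurePreserving_swap.measure_preimage hAm.nullMeasurableSet]
    exact hAnull
  have hae : ∀ᵐ t ∂volume, ∀ᵐ h ∂volume, 0 ≤ h → 0 ≤ t → w (t + h) = w t := by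
    have h1 : ∀ᵐ p ∂(volume.prod volume), p ∉ Prod.swap ⁻¹' A := by
      rw [ae_iff]
      simp only [not_not]
      exact hA'null
    filter_upwards [Measure.ae_ae_of_ae_prod h1] with t ht
    filter_upwards [ht] with h hth hh htpos
    simp only [Set.mem_preimage, hAdef, Set.mem_setOf_eq, Prod.snd_swap, Prod.fst_swap] at hth
    by_contra hne
    exact hth ⟨hh, htpos, hne⟩
  -- tail-constancy
  have htail : ∀ᵐ t ∂volume, 0 ≤ t → ∀ᵐ u ∂volume, t ≤ u → w u = w t := by
    filter_upwards [hae] with t ht htpos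
    have hqmp : Measure.QuasiMeasurePreserving (fun u : ℝ => u - t) volume volume :=
      (measurePreserving_sub_right volume t).quasiMeasurePreserving
    filter_upwards [hqmp.ae ht] with u hu htu
    have h0 : (0 : ℝ) ≤ u - t := by linarith
    have := hu h0 htpos
    rwa [add_sub_cancel] at this
  -- pick a base point t₀
  obtain ⟨t₀, ht₀, hGt₀⟩ := exists_ge_of_ae 0
    (fun t => 0 ≤ t → ∀ᵐ u ∂volume, t ≤ u → w u = w t) htail
  have hEt₀ : ∀ᵐ u ∂volume, t₀ ≤ u → w u = w t₀ := hGt₀ ht₀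
  -- w is a.e. constant on [0,∞)
  have hconst : ∀ᵐ t ∂volume, 0 ≤ t → w t = w t₀ := by
    filter_upwards [htail] with t ht htpos
    obtain ⟨u, hu, h1, h2⟩ := exists_ge_of_ae (max t t₀)
      (fun u => (t ≤ u → w u = w t) ∧ (t₀ ≤ u → w u = w t₀)) ((ht htpos).and hEt₀)
    rw [← h1 (le_trans (le_max_left _ _) hu), h2 (le_trans (le_max_right _ _) hu)]
  refine ⟨w t₀, ?_, ?_⟩
  · filter_upwards [hconst] with t ht htpos
    have hwt := ht htpos
    simp only [hwdef] at hwt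
    rw [Complex.exp_neg, eq_comm, mul_inv_eq_iff_eq_mul₀ (Complex.exp_ne_zero _),
      mul_comm (z t)]
    exact hwt.symm
  · intro b hb
    have ha : ∀ᵐ t ∂volume, 0 ≤ t → z t = w t₀ * Complex.exp (-(s * t)) := by
      filter_upwards [hconst] with t ht htpos
      have hwt := ht htpos
      simp only [hwdef] at hwt
      rw [Complex.exp_neg, eq_comm, mul_inv_eq_iff_eq_mul₀ (Complex.exp_ne_zero _),
        mul_comm (z t)]
      exact hwt.symm
    obtain ⟨u, hu, h1, h2⟩ := exists_ge_of_ae 0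
      (fun t => (0 ≤ t → z t = b * Complex.exp (-(s * t))) ∧
        (0 ≤ t → z t = w t₀ * Complex.exp (-(s * t)))) (hb.and ha)
    have := (h1 hu).symm.trans (h2 hu)
    exact mul_right_cancel₀ (Complex.exp_ne_zero _) this
end

section
/- Let ν, μ ∈ ℝ with ν ≤ μ, and let X, Y be complex Hilbert spaces. Let S_ν : L²_ν(ℝ;X) → L²_ν(ℝ;Y) and S_μ : L²_μ(ℝ;X) → L²_μ(ℝ;Y) be bounded linear operators, both causal. Let 𝓓 be a set of strongly measurable functions f : ℝ → X each belonging to both L²_ν(ℝ;X) and L²_μ(ℝ;X), such that the set of equivalence classes of elements of 𝓓 is dense in L²_μ(ℝ;X), and such that S_ν f = S_μ f almost everywhere for every f ∈ 𝓓. Then S_ν f = S_μ f almost everywhere for every strongly measurable f : ℝ → X belonging to both L²_ν(ℝ;X) and L²_μ(ℝ;X). -/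
open MeasureTheory
open scoped ENNReal NNReal

noncomputable section

/-- The exponentially weighted measure `e^{-2νt} dt` on `ℝ`, so that
`Lp X 2 (wmeas ν)` is the space `L²_ν(ℝ;X)`. -/
def wmeas (ν : ℝ) : Measure ℝ :=
  volume.withDensity fun t => ENNReal.ofReal (Real.exp (-(2 * ν * t)))

lemma wmeas_dens_meas (ν : ℝ) :
    Measurable fun t : ℝ => ENNReal.ofReal (Real.exp (-(2 * ν * t))) := by fun_prop

lemma wmeas_ae (ν : ℝ) : ae (wmeas ν) = ae (volume : Measure ℝ) := by
  refine le_antisymm ?_ ?_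
  · exact (withDensity_absolutelyContinuous _ _).ae_le
  · refine (withDensity_absolutelyContinuous' (wmeas_dens_meas ν).aemeasurable ?_).ae_le
    exact Filter.Eventually.of_forall fun t => by positivity

lemma eLpNorm_trunc_le {E : Type*} [NormedAddCommGroup E] {ν μ t : ℝ} (hνμ : ν ≤ μ)
    (f : ℝ → E) :
    eLpNorm ((Set.Iic t).indicator f) 2 (wmeas ν)
      ≤ ENNReal.ofReal (Real.exp ((μ - ν) * t)) * eLpNorm f 2 (wmeas μ) := by
  set c : ℝ≥0∞ := ENNReal.ofReal (Real.exp ((μ - ν) * t)) with hc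
  have hc2 : c ^ 2 = ENNReal.ofReal (Real.exp (2 * (μ - ν) * t)) := by
    rw [hc, ← ENNReal.ofReal_pow (Real.exp_pos _).le]
    congr 1
    rw [sq, ← Real.exp_add]; ring_nf
  have hmono : (wmeas ν).restrict (Set.Iic t)
      ≤ (c ^ 2) • ((wmeas μ).restrict (Set.Iic t)) := by
    rw [wmeas, wmeas, restrict_withDensity measurableSet_Iic,
      restrict_withDensity measurableSet_Iic,
      ← withDensity_smul' _ _ (by rw [hc2]; exact ENNReal.ofReal_ne_top)]
    refine withDensity_mono ?_
    filter_upwards [ae_restrict_mem measurableSet_Iic] with s hs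
    have h1 : Real.exp (-(2 * ν * s)) ≤ Real.exp (2 * (μ - ν) * t) * Real.exp (-(2 * μ * s)) := by
      rw [← Real.exp_add]
      apply Real.exp_le_exp.mpr
      have : (s : ℝ) ≤ t := hs
      nlinarith
    calc ENNReal.ofReal (Real.exp (-(2 * ν * s)))
        ≤ ENNReal.ofReal (Real.exp (2 * (μ - ν) * t) * Real.exp (-(2 * μ * s))) :=
          ENNReal.ofReal_le_ofReal h1
      _ = c ^ 2 * ENNReal.ofReal (Real.exp (-(2 * μ * s))) := by
          rw [ENNReal.ofReal_mul (Real.exp_pos _).le, hc2]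
      _ = ((c ^ 2) • fun s : ℝ => ENNReal.ofReal (Real.exp (-(2 * μ * s)))) s := rfl
  have hrw : (c ^ 2) ^ (1 / (2:ℝ≥0∞)).toReal = c := by
    rw [← ENNReal.rpow_natCast c 2, ← ENNReal.rpow_mul]
    norm_num
  calc eLpNorm ((Set.Iic t).indicator f) 2 (wmeas ν)
      = eLpNorm f 2 ((wmeas ν).restrict (Set.Iic t)) :=
        eLpNorm_indicator_eq_eLpNorm_restrict measurableSet_Iic
    _ ≤ eLpNorm f 2 ((c ^ 2) • ((wmeas μ).restrict (Set.Iic t))) :=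
        eLpNorm_mono_measure f hmono
    _ = (c ^ 2) ^ (1 / (2:ℝ≥0∞)).toReal • eLpNorm f 2 ((wmeas μ).restrict (Set.Iic t)) :=
        eLpNorm_smul_measure_of_ne_top (by norm_num) _ _
    _ = c * eLpNorm f 2 ((wmeas μ).restrict (Set.Iic t)) := by rw [hrw, smul_eq_mul]
    _ ≤ c * eLpNorm f 2 (wmeas μ) := by
        gcongr
        exact Measure.restrict_le_self

section Trunc

variable {E : Type*} [NormedAddCommGroup E]

lemma aesm_wmeas {ν μ : ℝ} {f : ℝ → E}
    (hf : AEStronglyMeasurable f (wmeas μ)) : AEStronglyMeasurable f (wmeas ν) := by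
  obtain ⟨g, hg, hfg⟩ := hf
  refine ⟨g, hg, ?_⟩
  rw [Filter.EventuallyEq, wmeas_ae] at hfg ⊢
  exact hfg

lemma memℒp_trunc {ν μ : ℝ} (t : ℝ) (hνμ : ν ≤ μ) {f : ℝ → E}
    (hf : MemLp f 2 (wmeas μ)) : MemLp ((Set.Iic t).indicator f) 2 (wmeas ν) :=
  ⟨(aesm_wmeas hf.1).indicator measurableSet_Iic,
    lt_of_le_of_lt (eLpNorm_trunc_le hνμ f)
      (ENNReal.mul_lt_top ENNReal.ofReal_lt_top hf.2)⟩

/-- Truncation to `(-∞, t]`, viewed as a map `L²_μ → L²_ν` for `ν ≤ μ`. -/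
def trunc (ν μ t : ℝ) (hνμ : ν ≤ μ) (f : Lp E 2 (wmeas μ)) : Lp E 2 (wmeas ν) :=
  (memℒp_trunc t hνμ (Lp.memLp f)).toLp _

lemma trunc_coe (ν μ t : ℝ) (hνμ : ν ≤ μ) (f : Lp E 2 (wmeas μ)) :
    ⇑(trunc ν μ t hνμ f) =ᵐ[volume] (Set.Iic t).indicator ⇑f := by
  have := MemLp.coeFn_toLp (memℒp_trunc t hνμ (Lp.memLp f))
  rw [Filter.EventuallyEq, wmeas_ae] at this
  exact this

lemma trunc_lipschitz (ν μ t : ℝ) (hνμ : ν ≤ μ) :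
    LipschitzWith (Real.toNNReal (Real.exp ((μ - ν) * t))) (trunc (E := E) ν μ t hνμ) := by
  intro f g
  rw [Lp.edist_def, Lp.edist_def]
  have h1 : ⇑(trunc ν μ t hνμ f) - ⇑(trunc ν μ t hνμ g)
      =ᵐ[wmeas ν] (Set.Iic t).indicator (⇑f - ⇑g) := by
    have hf := MemLp.coeFn_toLp (memℒp_trunc t hνμ (Lp.memLp f))
    have hg := MemLp.coeFn_toLp (memℒp_trunc t hνμ (Lp.memLp g))
    filter_upwards [hf, hg] with s hfs hgs
    simp only [trunc, Pi.sub_apply, hfs, hgs, Set.indicator_apply]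
    split_ifs <;> simp
  rw [eLpNorm_congr_ae h1]
  have : (Real.toNNReal (Real.exp ((μ - ν) * t)) : ℝ≥0∞)
      = ENNReal.ofReal (Real.exp ((μ - ν) * t)) := rfl
  rw [this]
  exact eLpNorm_trunc_le hνμ _

end Trunc

/-- A causal operator maps functions agreeing on `(-∞, t]` to functions agreeing there. -/
lemma causal_eq {X Y : Type*}
    [NormedAddCommGroup X] [NormedSpace ℂ X]
    [NormedAddCommGroup Y] [NormedSpace ℂ Y]
    {ν : ℝ} (S : Lp X 2 (wmeas ν) →L[ℂ] Lp Y 2 (wmeas ν))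
    (hc : ∀ t : ℝ, ∀ f : Lp X 2 (wmeas ν),
      (∀ᵐ s ∂volume, s ≤ t → f s = 0) → (∀ᵐ s ∂volume, s ≤ t → S f s = 0))
    (t : ℝ) (f g : Lp X 2 (wmeas ν))
    (h : ∀ᵐ s ∂volume, s ≤ t → f s = g s) :
    ∀ᵐ s ∂volume, s ≤ t → S f s = S g s := by
  have hsub : ⇑(f - g) =ᵐ[volume] ⇑f - ⇑g := by
    have := Lp.coeFn_sub f g
    rwa [Filter.EventuallyEq, wmeas_ae] at this
  have h0 : ∀ᵐ s ∂volume, s ≤ t → (f - g) s = 0 := by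
    filter_upwards [h, hsub] with s hs h2 hst
    rw [h2, Pi.sub_apply, hs hst, sub_self]
  have hout := hc t (f - g) h0
  have hSsub : ⇑(S (f - g)) =ᵐ[volume] ⇑(S f) - ⇑(S g) := by
    rw [map_sub]
    have := Lp.coeFn_sub (S f) (S g)
    rwa [Filter.EventuallyEq, wmeas_ae] at this
  filter_upwards [hout, hSsub] with s h1 h2 hst
  have h3 := h1 hst
  rw [h2, Pi.sub_apply] at h3
  exact sub_eq_zero.mp h3

/-- Let `ν ≤ μ`, and let `S_ν`, `S_μ` be bounded causal operators on
`L²_ν` resp. `L²_μ`.  If they agree on a family `𝓓` of functions lying in both spaces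
whose classes are dense in `L²_μ(ℝ;X)`, then they agree on the whole intersection
`L²_ν(ℝ;X) ∩ L²_μ(ℝ;X)`. -/
theorem statement8 {X Y : Type*}
    [NormedAddCommGroup X] [InnerProductSpace ℂ X] [CompleteSpace X]
    [NormedAddCommGroup Y] [InnerProductSpace ℂ Y] [CompleteSpace Y]
    (ν μ : ℝ) (hνμ : ν ≤ μ)
    (Sν : Lp X 2 (wmeas ν) →L[ℂ] Lp Y 2 (wmeas ν))
    (Sμ : Lp X 2 (wmeas μ) →L[ℂ] Lp Y 2 (wmeas μ))
    (hcν : ∀ t : ℝ, ∀ f : Lp X 2 (wmeas ν),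
      (∀ᵐ s ∂volume, s ≤ t → f s = 0) → (∀ᵐ s ∂volume, s ≤ t → Sν f s = 0))
    (hcμ : ∀ t : ℝ, ∀ f : Lp X 2 (wmeas μ),
      (∀ᵐ s ∂volume, s ≤ t → f s = 0) → (∀ᵐ s ∂volume, s ≤ t → Sμ f s = 0))
    (𝓓 : Set (ℝ → X))
    (h𝓓 : ∀ f ∈ 𝓓, MemLp f 2 (wmeas ν) ∧ MemLp f 2 (wmeas μ))
    (hdense : Dense {g : Lp X 2 (wmeas μ) | ∃ f ∈ 𝓓, (g : ℝ → X) =ᵐ[volume] f})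
    (hagree : ∀ f ∈ 𝓓, ∀ (u : Lp X 2 (wmeas ν)) (v : Lp X 2 (wmeas μ)),
      (u : ℝ → X) =ᵐ[volume] f → (v : ℝ → X) =ᵐ[volume] f →
      (Sν u : ℝ → Y) =ᵐ[volume] (Sμ v : ℝ → Y)) :
    ∀ (u : Lp X 2 (wmeas ν)) (v : Lp X 2 (wmeas μ)),
      (u : ℝ → X) =ᵐ[volume] (v : ℝ → X) →
      (Sν u : ℝ → Y) =ᵐ[volume] (Sμ v : ℝ → Y) := by
  intro u v huv
  -- It suffices to prove equality a.e. on `(-∞, n]` for every natural `n`.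
  have key : ∀ t : ℝ, ∀ᵐ s ∂volume, s ≤ t → Sν u s = Sμ v s := by
    intro t
    -- The two continuous maps `L²_μ(X) → L²_ν(Y)`.
    set F : Lp X 2 (wmeas μ) → Lp Y 2 (wmeas ν) :=
      fun g => trunc ν ν t le_rfl (Sν (trunc ν μ t hνμ g)) with hF
    set G : Lp X 2 (wmeas μ) → Lp Y 2 (wmeas ν) :=
      fun g => trunc ν μ t hνμ (Sμ g) with hG
    have hFc : Continuous F :=
      ((trunc_lipschitz ν ν t le_rfl).continuous).comp
        (Sν.continuous.comp (trunc_lipschitz ν μ t hνμ).continuous)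
    have hGc : Continuous G :=
      ((trunc_lipschitz ν μ t hνμ).continuous).comp Sμ.continuous
    -- They agree on the dense set.
    have hEq : Set.EqOn F G {g : Lp X 2 (wmeas μ) | ∃ f ∈ 𝓓, (g : ℝ → X) =ᵐ[volume] f} := by
      rintro g ⟨f, hf, hgf⟩
      obtain ⟨hfν, hfμ⟩ := h𝓓 f hf
      set u0 : Lp X 2 (wmeas ν) := hfν.toLp f with hu0def
      have hu0 : ⇑u0 =ᵐ[volume] f := by
        have := hfν.coeFn_toLp
        rwa [Filter.EventuallyEq, wmeas_ae] at this
      have hag : ⇑(Sν u0) =ᵐ[volume] ⇑(Sμ g) := hagree f hf u0 g hu0 hgf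
      have h1 : ∀ᵐ s ∂volume, s ≤ t → (trunc ν μ t hνμ g) s = u0 s := by
        filter_upwards [trunc_coe ν μ t hνμ g, hgf, hu0] with s e1 e2 e3 hst
        rw [e1, Set.indicator_of_mem (Set.mem_Iic.mpr hst), e2, e3]
      have h2 := causal_eq Sν hcν t _ _ h1
      refine Lp.ext ?_
      rw [Filter.EventuallyEq, wmeas_ae]
      filter_upwards [trunc_coe ν ν t le_rfl (Sν (trunc ν μ t hνμ g)),
        trunc_coe ν μ t hνμ (Sμ g), h2, hag] with s e1 e2 e3 e4
      show F g s = G g s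
      rw [hF, hG]
      simp only
      rw [e1, e2]
      by_cases hst : s ∈ Set.Iic t
      · rw [Set.indicator_of_mem hst, Set.indicator_of_mem hst, e3 hst, e4]
      · rw [Set.indicator_of_notMem hst, Set.indicator_of_notMem hst]
    have hFG : F = G := Continuous.ext_on hdense hFc hGc hEq
    have hkey : F v = G v := congrFun hFG v
    have hcoe : ⇑(F v) =ᵐ[volume] ⇑(G v) := by rw [hkey]
    have h3 : ∀ᵐ s ∂volume, s ≤ t → (trunc ν μ t hνμ v) s = u s := by
      filter_upwards [trunc_coe ν μ t hνμ v, huv] with s e1 e2 hst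
      rw [e1, Set.indicator_of_mem (Set.mem_Iic.mpr hst), ← e2]
    have h4 := causal_eq Sν hcν t _ _ h3
    filter_upwards [hcoe, trunc_coe ν ν t le_rfl (Sν (trunc ν μ t hνμ v)),
      trunc_coe ν μ t hνμ (Sμ v), h4] with s e0 e1 e2 e4 hst
    have hst' : s ∈ Set.Iic t := hst
    have eF : F v s = Sν (trunc ν μ t hνμ v) s := by
      rw [hF]; simp only; rw [e1, Set.indicator_of_mem hst']
    have eG : G v s = Sμ v s := by
      rw [hG]; simp only; rw [e2, Set.indicator_of_mem hst']
    calc Sν u s = Sν (trunc ν μ t hνμ v) s := (e4 hst).symm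
      _ = F v s := eF.symm
      _ = G v s := by rw [e0]
      _ = Sμ v s := eG
  have key' : ∀ᵐ s ∂volume, ∀ n : ℕ, s ≤ (n : ℝ) → Sν u s = Sμ v s :=
    ae_all_iff.mpr fun n => key n
  filter_upwards [key'] with s hs
  obtain ⟨n, hn⟩ := exists_nat_ge s
  exact hs n hn

end
end

section
/- Let (X,(Q_t)_{t∈ℝ}) and (Y,(R_t)_{t∈ℝ}) be resolution spaces and let S : dom(S) ⊆ X → Y be a densely defined, linear, continuous operator (i.e., there is K ≥ 0 with ‖Sf‖ ≤ K‖f‖ for all f ∈ dom(S)), and let S̄ ∈ L(X,Y) denote its unique continuous extension to X. Then the following conditions are equivalent: (i) for all f ∈ X and t ∈ ℝ, Q_t f = 0 implies R_t S̄ f = 0; (ii) S is causal; (iii) S is causal on D for some dense D ⊆ Y; (iv) S is strongly causal; (v) for all t ∈ ℝ, R_t S̄ Q_t = R_t S̄; (vi) for all t ∈ ℝ, (1−R_t) S̄ (1−Q_t) = S̄ (1−Q_t). -/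
open MeasureTheory Filter

noncomputable section

/-- A family `(Q_t)_{t∈ℝ}` of orthogonal projections is a resolution of the identity. -/
def IsResolution {X : Type*} [NormedAddCommGroup X] [InnerProductSpace ℂ X]
    (Q : ℝ → X →L[ℂ] X) : Prop :=
  (∀ t : ℝ, ∀ x y : X, (inner ℂ (Q t x) y : ℂ) = inner ℂ x (Q t y)) ∧
  (∀ t : ℝ, ∀ x : X, Q t (Q t x) = Q t x) ∧
  (∀ s t : ℝ, (Set.range (Q t) ⊆ Set.range (Q s) ↔ t ≤ s)) ∧
  (∀ x : X, Tendsto (fun t => Q t x) atBot (nhds 0)) ∧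
  (∀ x : X, Tendsto (fun t => Q t x) atTop (nhds x))

/-- `S` is causal on `D ⊆ Y`. -/
def CausalOn {X Y : Type*} [NormedAddCommGroup X] [InnerProductSpace ℂ X]
    [NormedAddCommGroup Y] [InnerProductSpace ℂ Y]
    (Q : ℝ → X →L[ℂ] X) (R : ℝ → Y →L[ℂ] Y) (S : X →ₗ.[ℂ] Y) (D : Set Y) : Prop :=
  ∀ r : ℝ, 0 < r → ∀ t : ℝ, ∀ φ ∈ D, ∃ C : ℝ, 0 ≤ C ∧
    ∀ f : S.domain, ‖(f : X)‖ ^ 2 + ‖S f‖ ^ 2 < r ^ 2 →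
      ‖(inner ℂ (R t (S f)) φ : ℂ)‖ ≤ C * ‖Q t (f : X)‖

/-- For a densely defined continuous linear operator `S` between
resolution spaces, with continuous extension `S̄ ∈ L(X,Y)`, the six formulations of
causality (i)–(vi) are equivalent. -/
theorem statement10 {X Y : Type*}
    [NormedAddCommGroup X] [InnerProductSpace ℂ X] [CompleteSpace X]
    [NormedAddCommGroup Y] [InnerProductSpace ℂ Y] [CompleteSpace Y]
    (Q : ℝ → X →L[ℂ] X) (R : ℝ → Y →L[ℂ] Y)
    (hQ : IsResolution Q) (hR : IsResolution R)
    (S : X →ₗ.[ℂ] Y) (hdense : Dense (S.domain : Set X))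
    (K : ℝ) (hK : 0 ≤ K) (hcont : ∀ f : S.domain, ‖S f‖ ≤ K * ‖(f : X)‖)
    (Sbar : X →L[ℂ] Y) (hSbar : ∀ f : S.domain, Sbar (f : X) = S f) :
    List.TFAE
      [∀ (f : X) (t : ℝ), Q t f = 0 → R t (Sbar f) = 0,
       CausalOn Q R S Set.univ,
       ∃ D : Set Y, Dense D ∧ CausalOn Q R S D,
       ∀ t : ℝ, ∃ C : ℝ, 0 ≤ C ∧ ∀ f : S.domain, ‖R t (S f)‖ ≤ C * ‖Q t (f : X)‖,
       ∀ t : ℝ, (R t).comp (Sbar.comp (Q t)) = (R t).comp Sbar,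
       ∀ t : ℝ, (ContinuousLinearMap.id ℂ Y - R t).comp
           (Sbar.comp (ContinuousLinearMap.id ℂ X - Q t)) =
         Sbar.comp (ContinuousLinearMap.id ℂ X - Q t)] := by
  tfae_have 1 → 5
  · intro h1 t
    ext x
    have hz : Q t (x - Q t x) = 0 := by
      rw [map_sub, hQ.2.1 t x, sub_self]
    have h := h1 (x - Q t x) t hz
    rw [map_sub, map_sub, sub_eq_zero] at h
    simpa using h.symm
  tfae_have 5 → 6
  · intro h5 t
    ext x
    have h := ContinuousLinearMap.ext_iff.mp (h5 t) x
    simp only [ContinuousLinearMap.comp_apply, ContinuousLinearMap.sub_apply,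
      ContinuousLinearMap.id_apply, map_sub] at h ⊢
    rw [h]
    abel
  tfae_have 6 → 1
  · intro h6 f t hf
    have h := ContinuousLinearMap.ext_iff.mp (h6 t) f
    simp only [ContinuousLinearMap.comp_apply, ContinuousLinearMap.sub_apply,
      ContinuousLinearMap.id_apply, map_sub, hf, map_zero, sub_zero] at h
    exact sub_eq_self.mp h
  tfae_have 5 → 4
  · intro h5 t
    refine ⟨‖(R t).comp Sbar‖, norm_nonneg _, fun f => ?_⟩
    have h := ContinuousLinearMap.ext_iff.mp (h5 t) (f : X)
    simp only [ContinuousLinearMap.comp_apply] at h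
    calc ‖R t (S f)‖ = ‖R t (Sbar (Q t (f : X)))‖ := by rw [h, hSbar]
      _ = ‖((R t).comp Sbar) (Q t (f : X))‖ := rfl
      _ ≤ ‖(R t).comp Sbar‖ * ‖Q t (f : X)‖ := ContinuousLinearMap.le_opNorm _ _
  tfae_have 4 → 2
  · intro h4 r hr t φ _
    obtain ⟨C, hC0, hC⟩ := h4 t
    refine ⟨C * ‖φ‖, by positivity, fun f _ => ?_⟩
    calc ‖(inner ℂ (R t (S f)) φ : ℂ)‖ = ‖(inner ℂ (R t (S f)) φ : ℂ)‖ :=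
          rfl
      _ ≤ ‖R t (S f)‖ * ‖φ‖ := norm_inner_le_norm _ _
      _ ≤ (C * ‖Q t (f : X)‖) * ‖φ‖ := by
          have := hC f
          have hφ : (0:ℝ) ≤ ‖φ‖ := norm_nonneg _
          nlinarith
      _ = C * ‖φ‖ * ‖Q t (f : X)‖ := by ring
  tfae_have 2 → 3
  · exact fun h => ⟨Set.univ, dense_univ, h⟩
  tfae_have 3 → 1
  · rintro ⟨D, hD, hCaus⟩ f t hf
    set r : ℝ := Real.sqrt ((1 + K ^ 2) * ‖f‖ ^ 2 + 1) with hrdef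
    have hr2 : r ^ 2 = (1 + K ^ 2) * ‖f‖ ^ 2 + 1 := Real.sq_sqrt (by positivity)
    have hr : 0 < r := Real.sqrt_pos.mpr (by positivity)
    obtain ⟨g, hg, hgt⟩ := mem_closure_iff_seq_limit.mp (hdense f)
    -- eventually the sequence is in the ball
    have hball : ∀ᶠ n in atTop, ‖g n‖ ^ 2 + ‖S ⟨g n, hg n⟩‖ ^ 2 < r ^ 2 := by
      have hlim : Tendsto (fun n => (1 + K ^ 2) * ‖g n‖ ^ 2) atTop
          (nhds ((1 + K ^ 2) * ‖f‖ ^ 2)) := by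
        exact (tendsto_const_nhds.mul ((hgt.norm).pow 2))
      have hlt : (1 + K ^ 2) * ‖f‖ ^ 2 < r ^ 2 := by rw [hr2]; linarith
      filter_upwards [hlim.eventually_lt_const hlt] with n hn
      have h1 : ‖S ⟨g n, hg n⟩‖ ≤ K * ‖g n‖ := hcont ⟨g n, hg n⟩
      have h2 : (0:ℝ) ≤ ‖S ⟨g n, hg n⟩‖ := norm_nonneg _
      nlinarith
    have key : ∀ φ ∈ D, (inner ℂ (R t (Sbar f)) φ : ℂ) = 0 := by
      intro φ hφ
      obtain ⟨C, hC0, hC⟩ := hCaus r hr t φ hφ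
      have hA : Tendsto (fun n => ‖(inner ℂ (R t (Sbar (g n))) φ : ℂ)‖) atTop
          (nhds ‖(inner ℂ (R t (Sbar f)) φ : ℂ)‖) := by
        have : Tendsto (fun n => R t (Sbar (g n))) atTop (nhds (R t (Sbar f))) :=
          ((R t).continuous.comp Sbar.continuous).continuousAt.tendsto.comp hgt
        exact ((this.inner tendsto_const_nhds).norm)
      have hB : Tendsto (fun n => C * ‖Q t (g n)‖) atTop (nhds (C * ‖Q t f‖)) :=
        tendsto_const_nhds.mul (((Q t).continuous.continuousAt.tendsto.comp hgt).norm)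
      have hev : (fun n => ‖(inner ℂ (R t (Sbar (g n))) φ : ℂ)‖) ≤ᶠ[atTop]
          fun n => C * ‖Q t (g n)‖ := by
        filter_upwards [hball] with n hn
        have := hC ⟨g n, hg n⟩ hn
        rw [← hSbar ⟨g n, hg n⟩] at this
        simpa using this
      have hle : ‖(inner ℂ (R t (Sbar f)) φ : ℂ)‖ ≤ C * ‖Q t f‖ :=
        le_of_tendsto_of_tendsto hA hB hev
      rw [hf, norm_zero, mul_zero] at hle
      exact norm_eq_zero.mp (le_antisymm hle (norm_nonneg _))
    have hc : Continuous fun φ : Y => (inner ℂ (R t (Sbar f)) φ : ℂ) :=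
      continuous_const.inner continuous_id
    have heq := Continuous.ext_on hD hc continuous_const (fun φ hφ => key φ hφ)
    have hy : (inner ℂ (R t (Sbar f)) (R t (Sbar f)) : ℂ) = 0 := congrFun heq _
    exact inner_self_eq_zero.mp hy
  tfae_finish

end
end

section
/- Let (X,(Q_t)_{t∈ℝ}) be a resolution space, let S : dom(S) ⊆ X → X be a linear operator and let c > 0. Assume that |⟨Q_t S f, f⟩| ≥ c·⟨Q_t f, f⟩ for every t ∈ ℝ and every f ∈ dom(S). Then S is injective, and the inverse S^{−1} : ran(S) → X satisfies |⟨Q_t S^{−1} g, φ⟩| ≤ (‖φ‖/c)·‖Q_t g‖ for all t ∈ ℝ, φ ∈ X and g ∈ ran(S). -/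
open MeasureTheory Filter

noncomputable section

/-- Let `(X,(Q_t)_t)` be a resolution space, `S` a linear operator in
`X` and `c > 0` with `|⟨Q_t S f, f⟩| ≥ c ⟨Q_t f, f⟩` (`= c‖Q_t f‖²`) for all `t` and
`f ∈ dom S`.  Then `S` is injective and its inverse satisfies
`|⟨Q_t S⁻¹ g, φ⟩| ≤ (‖φ‖/c) ‖Q_t g‖` for all `t`, `φ ∈ X` and `g ∈ ran S`. -/
theorem statement11 {X : Type*}
    [NormedAddCommGroup X] [InnerProductSpace ℂ X] [CompleteSpace X]
    (Q : ℝ → X →L[ℂ] X) (hQ : IsResolution Q)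
    (S : X →ₗ.[ℂ] X) (c : ℝ) (hc : 0 < c)
    (hpos : ∀ t : ℝ, ∀ f : S.domain,
      c * ‖Q t (f : X)‖ ^ 2 ≤ ‖(inner ℂ (Q t (S f)) ((f : X)) : ℂ)‖) :
    (∀ f g : S.domain, S f = S g → f = g) ∧
    (∀ (t : ℝ) (φ : X) (f : S.domain),
      ‖(inner ℂ (Q t (f : X)) φ : ℂ)‖ ≤ (‖φ‖ / c) * ‖Q t (S f)‖) := by

  obtain ⟨hsa, hidem, _, _, htop⟩ := hQ
  -- key estimate: c * ‖Q t f‖ ≤ ‖Q t (S f)‖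
  have key : ∀ (t : ℝ) (f : S.domain), c * ‖Q t (f : X)‖ ≤ ‖Q t (S f)‖ := by
    intro t f
    have h1 : (inner ℂ (Q t (S f)) ((f : X)) : ℂ) = inner ℂ (Q t (S f)) (Q t (f : X)) := by
      rw [hsa t (S f) (f : X), hsa t (S f) (Q t (f : X)), hidem]
    have h2 := hpos t f
    rw [h1] at h2
    have h3 : ‖(inner ℂ (Q t (S f)) (Q t (f : X)) : ℂ)‖
        ≤ ‖Q t (S f)‖ * ‖Q t (f : X)‖ := by
      exact norm_inner_le_norm _ _
    have h4 : c * ‖Q t (f : X)‖ ^ 2 ≤ ‖Q t (S f)‖ * ‖Q t (f : X)‖ := h2.trans h3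
    rcases eq_or_lt_of_le (norm_nonneg (Q t (f : X))) with h0 | h0
    · rw [← h0, mul_zero]; exact norm_nonneg _
    · nlinarith [h4, h0]
  constructor
  · intro f g hfg
    have hsub : S (f - g) = 0 := by rw [LinearPMap.map_sub, hfg, sub_self]
    have hz : ∀ t : ℝ, Q t ((f : X) - (g : X)) = 0 := by
      intro t
      have := key t (f - g)
      have hv : ((f - g : S.domain) : X) = (f : X) - (g : X) := rfl
      rw [hsub, hv] at this
      simp only [map_zero, norm_zero] at this
      have : ‖Q t ((f : X) - (g : X))‖ ≤ 0 := by nlinarith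
      simpa [norm_le_zero_iff] using this
    have hlim := htop ((f : X) - (g : X))
    have : Tendsto (fun _ : ℝ => (0 : X)) atTop (nhds ((f : X) - (g : X))) := by
      simpa [hz] using hlim
    have h0 : (f : X) - (g : X) = 0 := (tendsto_nhds_unique tendsto_const_nhds this).symm
    exact Subtype.ext (by rwa [← sub_eq_zero])
  · intro t φ f
    have h1 : ‖(inner ℂ (Q t (f : X)) φ : ℂ)‖ ≤ ‖Q t (f : X)‖ * ‖φ‖ := by
      exact norm_inner_le_norm _ _
    have h2 := key t f
    have hφ : 0 ≤ ‖φ‖ := norm_nonneg φ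
    calc ‖(inner ℂ (Q t (f : X)) φ : ℂ)‖ ≤ ‖Q t (f : X)‖ * ‖φ‖ := h1
      _ ≤ (‖Q t (S f)‖ / c) * ‖φ‖ := by
          apply mul_le_mul_of_nonneg_right _ hφ
          rw [le_div_iff₀ hc]; linarith
      _ = (‖φ‖ / c) * ‖Q t (S f)‖ := by ring


end
end

section
/- Let X be a complex Hilbert space, c > 0, and let B : dom(B) ⊆ X → X be a densely defined linear operator satisfying Re⟨Bφ,φ⟩ ≥ c·⟨φ,φ⟩ for all φ ∈ dom(B). Then: (a) B is closable; (b) if, in addition, |⟨B*ψ,ψ⟩| ≥ c·⟨ψ,ψ⟩ for all ψ ∈ dom(B*), then the closure B̄ is a bijection from dom(B̄) onto X, its inverse is a bounded linear operator with ‖B̄^{−1}‖ ≤ 1/c, and ran(B) is dense in X; (c) if B is continuous (there is K ≥ 0 with ‖Bφ‖ ≤ K‖φ‖ for all φ ∈ dom(B)), then the hypothesis of (a) implies the additional hypothesis of (b). -/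
open MeasureTheory

noncomputable section

section AuxStatement12

open Filter Topology

variable {X : Type*} [NormedAddCommGroup X] [InnerProductSpace ℂ X] [CompleteSpace X]

private lemma st12_norm_bound {c : ℝ} (hc : 0 < c) {x y : X}
    (h : c * ‖x‖ ^ 2 ≤ (inner ℂ y x : ℂ).re) : c * ‖x‖ ≤ ‖y‖ := by
  rcases eq_or_ne x 0 with rfl | hx
  · simp
  · have h2 : (inner ℂ y x : ℂ).re ≤ ‖y‖ * ‖x‖ := by
      calc (inner ℂ y x : ℂ).re ≤ ‖(inner ℂ y x : ℂ)‖ := Complex.re_le_norm _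
        _ ≤ ‖y‖ * ‖x‖ := by exact norm_inner_le_norm y x
    have hxpos : 0 < ‖x‖ := norm_pos_iff.mpr hx
    nlinarith

/-- The shifted coercivity inequality passes to the closure of the graph. -/
private lemma st12_shift {B : X →ₗ.[ℂ] X} {c : ℝ}
    (hpos : ∀ φ : B.domain, c * ‖(φ : X)‖ ^ 2 ≤ (inner ℂ (B φ) ((φ : X)) : ℂ).re)
    (ψ : B.domain) (t : ℝ) {z : X × X}
    (hz : z ∈ closure (B.graph : Set (X × X))) :
    c * ‖z.1 + (t : ℂ) • (ψ : X)‖ ^ 2 ≤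
      (inner ℂ (z.2 + (t : ℂ) • B ψ) (z.1 + (t : ℂ) • (ψ : X)) : ℂ).re := by
  set S : Set (X × X) := {w : X × X | c * ‖w.1 + (t : ℂ) • (ψ : X)‖ ^ 2 ≤
      (inner ℂ (w.2 + (t : ℂ) • B ψ) (w.1 + (t : ℂ) • (ψ : X)) : ℂ).re} with hS
  have hclosed : IsClosed S := by
    apply isClosed_le
    · exact continuous_const.mul
        (((continuous_fst.add continuous_const).norm).pow 2)
    · exact Complex.continuous_re.comp
        ((continuous_snd.add continuous_const).inner (continuous_fst.add continuous_const))
  have hsub : (B.graph : Set (X × X)) ⊆ S := by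
    rintro w hw
    rw [SetLike.mem_coe, LinearPMap.mem_graph_iff] at hw
    obtain ⟨φ, h1, h2⟩ := hw
    have key := hpos (φ + (t : ℂ) • ψ)
    simp only [Submodule.coe_add, SetLike.val_smul, LinearPMap.map_add, LinearPMap.map_smul] at key
    simpa [hS, ← h1, ← h2] using key
  exact closure_minimal hsub hclosed hz

private lemma st12_closure_mem {B : X →ₗ.[ℂ] X} {c : ℝ}
    (hpos : ∀ φ : B.domain, c * ‖(φ : X)‖ ^ 2 ≤ (inner ℂ (B φ) ((φ : X)) : ℂ).re)
    {z : X × X} (hz : z ∈ closure (B.graph : Set (X × X))) :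
    c * ‖z.1‖ ^ 2 ≤ (inner ℂ z.2 z.1 : ℂ).re := by
  have hclosed : IsClosed {w : X × X | c * ‖w.1‖ ^ 2 ≤ (inner ℂ w.2 w.1 : ℂ).re} := by
    apply isClosed_le
    · exact continuous_const.mul ((continuous_fst.norm).pow 2)
    · exact Complex.continuous_re.comp (continuous_snd.inner continuous_fst)
  have hsub : (B.graph : Set (X × X)) ⊆
      {w : X × X | c * ‖w.1‖ ^ 2 ≤ (inner ℂ w.2 w.1 : ℂ).re} := by
    rintro w hw
    rw [SetLike.mem_coe, LinearPMap.mem_graph_iff] at hw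
    obtain ⟨φ, h1, h2⟩ := hw
    simpa [Set.mem_setOf_eq, ← h1, ← h2] using hpos φ
  exact closure_minimal hsub hclosed hz

private lemma st12_isClosable {B : X →ₗ.[ℂ] X}
    (hdense : Dense (B.domain : Set X)) {c : ℝ} (hc : 0 < c)
    (hpos : ∀ φ : B.domain, c * ‖(φ : X)‖ ^ 2 ≤ (inner ℂ (B φ) ((φ : X)) : ℂ).re) :
    B.IsClosable := by
  refine ⟨B.graph.topologicalClosure.toLinearPMap,
    (Submodule.toLinearPMap_graph_eq _ ?_).symm⟩
  rintro ⟨x, y⟩ hz h1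
  have hz' : ((x, y) : X × X) ∈ closure (B.graph : Set (X × X)) := by
    rw [← Submodule.topologicalClosure_coe]; exact hz
  dsimp only at h1
  subst h1
  -- first step: `0 ≤ Re ⟪y, ψ⟫` for all `ψ` in the domain.
  have key0 : ∀ ψ : B.domain, 0 ≤ (inner ℂ y ((ψ : X)) : ℂ).re := by
    intro ψ
    set r : ℝ := (inner ℂ y ((ψ : X)) : ℂ).re with hr
    set A : ℝ := (inner ℂ (B ψ) ((ψ : X)) : ℂ).re - c * ‖(ψ : X)‖ ^ 2 with hA
    have hA0 : 0 ≤ A := sub_nonneg.mpr (hpos ψ)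
    have ht : ∀ t : ℝ, 0 < t → -(t * A) ≤ r := by
      intro t htpos
      have h := st12_shift hpos ψ t hz'
      simp only [zero_add] at h
      have hre : (inner ℂ (y + (t : ℂ) • B ψ) ((t : ℂ) • (ψ : X)) : ℂ).re =
          t * (inner ℂ y ((ψ : X)) : ℂ).re + t * (t * (inner ℂ (B ψ) ((ψ : X)) : ℂ).re) := by
        rw [inner_add_left, inner_smul_left, inner_smul_right, inner_smul_right]
        simp [Complex.add_re, Complex.conj_ofReal, Complex.re_ofReal_mul]
      have hnorm : ‖(t : ℂ) • (ψ : X)‖ ^ 2 = t ^ 2 * ‖(ψ : X)‖ ^ 2 := by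
        rw [norm_smul, mul_pow, Complex.norm_real, Real.norm_eq_abs, sq_abs]
      rw [hre, hnorm] at h
      nlinarith [h, mul_pos htpos htpos]
    have hmain : ∀ ε : ℝ, 0 < ε → 0 ≤ r + ε := by
      intro ε hε
      rcases eq_or_lt_of_le hA0 with hA1 | hA1
      · have := ht 1 one_pos
        rw [← hA1] at this
        simp at this
        linarith
      · have := ht (ε / A) (div_pos hε hA1)
        rw [div_mul_cancel₀ _ (ne_of_gt hA1)] at this
        linarith
    by_contra hcon
    push_neg at hcon
    have := hmain (-r / 2) (by linarith)
    linarith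
  -- hence `⟪y, ψ⟫ = 0` on the domain
  have key : ∀ ψ : B.domain, (inner ℂ y ((ψ : X)) : ℂ) = 0 := by
    intro ψ
    have h1 := key0 ψ
    have h2 := key0 (-ψ)
    have h3 := key0 ((Complex.I : ℂ) • ψ)
    have h4 := key0 (-((Complex.I : ℂ) • ψ))
    simp only [Submodule.coe_neg, SetLike.val_smul, inner_neg_right, inner_smul_right,
      Complex.neg_re, Complex.mul_re, Complex.I_re, Complex.I_im] at h2 h3 h4
    apply Complex.ext
    · simp only [Complex.zero_re]; linarith
    · simp only [Complex.zero_im]; linarith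
  have hfun : (fun x : X => (inner ℂ y x : ℂ)) = fun _ => (0 : ℂ) := by
    refine Continuous.ext_on hdense (continuous_const.inner continuous_id) continuous_const ?_
    intro x hx
    exact key ⟨x, hx⟩
  have := congrFun hfun y
  exact inner_self_eq_zero.mp this

end AuxStatement12

/-- Let `B` be a densely defined linear operator in a complex Hilbert
space with `Re⟨Bφ,φ⟩ ≥ c⟨φ,φ⟩` for all `φ ∈ dom B`, `c > 0`.  Then (a) `B` is closable;
(b) if in addition `|⟨B*ψ,ψ⟩| ≥ c⟨ψ,ψ⟩` on `dom B*` (formulated via the defining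
property of the adjoint), then the closure `B̄` is a bijection onto `X` with
`‖B̄⁻¹‖ ≤ 1/c` and `ran B` is dense; (c) if `B` is continuous, the hypothesis of (a)
implies the additional hypothesis of (b). -/
theorem statement12 {X : Type*}
    [NormedAddCommGroup X] [InnerProductSpace ℂ X] [CompleteSpace X]
    (B : X →ₗ.[ℂ] X) (hdense : Dense (B.domain : Set X)) (c : ℝ) (hc : 0 < c)
    (hpos : ∀ φ : B.domain, c * ‖(φ : X)‖ ^ 2 ≤ (inner ℂ (B φ) ((φ : X)) : ℂ).re) :
    B.IsClosable ∧
    ((∀ ψ η : X, (∀ φ : B.domain, (inner ℂ (B φ) ψ : ℂ) = inner ℂ ((φ : X)) η) →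
        c * ‖ψ‖ ^ 2 ≤ ‖(inner ℂ η ψ : ℂ)‖) →
      (∀ x y : B.closure.domain, B.closure x = B.closure y → x = y) ∧
      (∀ y : X, ∃ x : B.closure.domain, B.closure x = y) ∧
      (∀ x : B.closure.domain, ‖(x : X)‖ ≤ (1 / c) * ‖B.closure x‖) ∧
      Dense {y : X | ∃ φ : B.domain, B φ = y}) ∧
    ((∃ K : ℝ, ∀ φ : B.domain, ‖B φ‖ ≤ K * ‖(φ : X)‖) →
      ∀ ψ η : X, (∀ φ : B.domain, (inner ℂ (B φ) ψ : ℂ) = inner ℂ ((φ : X)) η) →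
        c * ‖ψ‖ ^ 2 ≤ ‖(inner ℂ η ψ : ℂ)‖) := by
  have hclosable : B.IsClosable := st12_isClosable hdense hc hpos
  have hgraph : (B.closure.graph : Set (X × X)) = closure (B.graph : Set (X × X)) := by
    rw [← hclosable.graph_closure_eq_closure_graph, Submodule.topologicalClosure_coe]
  refine ⟨hclosable, ?_, ?_⟩
  · intro hadj
    have hposc : ∀ x : B.closure.domain,
        c * ‖(x : X)‖ ^ 2 ≤ (inner ℂ (B.closure x) ((x : X)) : ℂ).re := by
      intro x
      have hm : (((x : X), B.closure x) : X × X) ∈ closure (B.graph : Set (X × X)) := by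
        rw [← hgraph]
        exact B.closure.mem_graph x
      exact st12_closure_mem hpos hm
    have hnormc : ∀ x : B.closure.domain, c * ‖(x : X)‖ ≤ ‖B.closure x‖ :=
      fun x => st12_norm_bound hc (hposc x)
    have hbound : ∀ x : B.closure.domain, ‖(x : X)‖ ≤ (1 / c) * ‖B.closure x‖ := by
      intro x
      have := hnormc x
      rw [one_div, ← div_eq_inv_mul, le_div_iff₀ hc]
      linarith
    have hinj : ∀ x y : B.closure.domain, B.closure x = B.closure y → x = y := by
      intro x y hxy
      have h0 : B.closure (x - y) = 0 := by rw [LinearPMap.map_sub, hxy, sub_self]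
      have h1 := hnormc (x - y)
      rw [h0, norm_zero] at h1
      have h2 : ‖((x - y : B.closure.domain) : X)‖ = 0 :=
        le_antisymm (by nlinarith [norm_nonneg ((x - y : B.closure.domain) : X)]) (norm_nonneg _)
      have h3 : ((x : X) - (y : X)) = 0 := by
        rw [← AddSubgroupClass.coe_sub]
        exact norm_eq_zero.mp h2
      exact Subtype.ext (sub_eq_zero.mp h3)
    have hdrange : Dense {y : X | ∃ φ : B.domain, B φ = y} := by
      have hset : {y : X | ∃ φ : B.domain, B φ = y} = (LinearMap.range B.toFun : Set X) := by
        ext y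
        exact ⟨fun ⟨φ, h⟩ => ⟨φ, h⟩, fun ⟨φ, h⟩ => ⟨φ, h⟩⟩
      rw [hset]
      apply Submodule.dense_iff_topologicalClosure_eq_top.mpr
      rw [Submodule.topologicalClosure_eq_top_iff, Submodule.eq_bot_iff]
      intro ψ hψ
      have horth : ∀ φ : B.domain, (inner ℂ (B φ) ψ : ℂ) = inner ℂ ((φ : X)) (0 : X) := by
        intro φ
        rw [inner_zero_right]
        exact hψ (B φ) ⟨φ, rfl⟩
      have h := hadj ψ 0 horth
      rw [inner_zero_left] at h
      simp only [norm_zero] at h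
      have hψ2 : ‖ψ‖ ^ 2 = 0 :=
        le_antisymm (by nlinarith) (sq_nonneg _)
      exact norm_eq_zero.mp ((pow_eq_zero_iff two_ne_zero).mp hψ2)
    have hsurj : ∀ y : X, ∃ x : B.closure.domain, B.closure x = y := by
      intro y
      obtain ⟨u, hu, hulim⟩ := mem_closure_iff_seq_limit.mp (hdrange y)
      choose φ hφ using hu
      have hcB : CauchySeq u := hulim.cauchySeq
      have hcφ : CauchySeq (fun n => ((φ n : X))) := by
        rw [Metric.cauchySeq_iff] at hcB ⊢
        intro ε hε
        obtain ⟨N, hN⟩ := hcB (c * ε) (mul_pos hc hε)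
        refine ⟨N, fun m hm n hn => ?_⟩
        have h1 := hN m hm n hn
        have h2 : c * ‖((φ m : X)) - (φ n : X)‖ ≤ ‖u m - u n‖ := by
          have h3 := st12_norm_bound hc (hpos (φ m - φ n))
          simpa [LinearPMap.map_sub, hφ] using h3
        rw [dist_eq_norm] at h1 ⊢
        nlinarith
      obtain ⟨x, hx⟩ := cauchySeq_tendsto_of_complete hcφ
      have hmem : ((x, y) : X × X) ∈ closure (B.graph : Set (X × X)) := by
        apply mem_closure_iff_seq_limit.mpr
        refine ⟨fun n => (((φ n : X)), u n), fun n => ?_, hx.prodMk_nhds hulim⟩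
        dsimp only
        rw [SetLike.mem_coe, ← hφ n]
        exact B.mem_graph (φ n)
      rw [← hgraph, SetLike.mem_coe, LinearPMap.mem_graph_iff] at hmem
      obtain ⟨x', _, hx2⟩ := hmem
      exact ⟨x', hx2⟩
    exact ⟨hinj, hsurj, hbound, hdrange⟩
  · rintro ⟨K, hK⟩ ψ η hψη
    obtain ⟨u, hu, hulim⟩ := mem_closure_iff_seq_limit.mp (hdense ψ)
    set φ : ℕ → B.domain := fun n => ⟨u n, hu n⟩ with hφdef
    have key : c * ‖ψ‖ ^ 2 ≤ (inner ℂ ψ η : ℂ).re := by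
      have hle : ∀ n, c * ‖u n‖ ^ 2 - K * ‖u n‖ * ‖ψ - u n‖ ≤ (inner ℂ (u n) η : ℂ).re := by
        intro n
        have h1 := hpos (φ n)
        have h2 := hψη (φ n)
        have h3 : (inner ℂ (B (φ n)) ψ : ℂ) =
            inner ℂ (B (φ n)) (u n) + inner ℂ (B (φ n)) (ψ - u n) := by
          rw [← inner_add_right]
          congr 1
          abel
        have h4 : |(inner ℂ (B (φ n)) (ψ - u n) : ℂ).re| ≤ K * ‖u n‖ * ‖ψ - u n‖ := by
          calc |(inner ℂ (B (φ n)) (ψ - u n) : ℂ).re|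
              ≤ ‖(inner ℂ (B (φ n)) (ψ - u n) : ℂ)‖ := Complex.abs_re_le_norm _
            _ ≤ ‖B (φ n)‖ * ‖ψ - u n‖ := by
                exact norm_inner_le_norm _ _
            _ ≤ K * ‖u n‖ * ‖ψ - u n‖ :=
                mul_le_mul_of_nonneg_right (hK (φ n)) (norm_nonneg _)
        have h5 : (inner ℂ (u n) η : ℂ).re =
            (inner ℂ (B (φ n)) (u n) : ℂ).re + (inner ℂ (B (φ n)) (ψ - u n) : ℂ).re := by
          rw [← h2, h3, Complex.add_re]
        have habs := abs_le.mp h4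
        have h1' : c * ‖u n‖ ^ 2 ≤ (inner ℂ (B (φ n)) (u n) : ℂ).re := h1
        linarith
      have hcont1 : Continuous fun v : X => c * ‖v‖ ^ 2 - K * ‖v‖ * ‖ψ - v‖ := by
        continuity
      have hl1 : Filter.Tendsto (fun n => c * ‖u n‖ ^ 2 - K * ‖u n‖ * ‖ψ - u n‖)
          Filter.atTop (nhds (c * ‖ψ‖ ^ 2 - K * ‖ψ‖ * ‖ψ - ψ‖)) :=
        (hcont1.tendsto ψ).comp hulim
      have hcont2 : Continuous fun v : X => (inner ℂ v η : ℂ).re :=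
        Complex.continuous_re.comp (continuous_id.inner continuous_const)
      have hl2 : Filter.Tendsto (fun n => (inner ℂ (u n) η : ℂ).re)
          Filter.atTop (nhds ((inner ℂ ψ η : ℂ).re)) :=
        (hcont2.tendsto ψ).comp hulim
      have := le_of_tendsto_of_tendsto' hl1 hl2 hle
      simpa using this
    have hsymm : (inner ℂ ψ η : ℂ).re = (inner ℂ η ψ : ℂ).re := by
      rw [← inner_conj_symm ψ η]
      exact (Complex.conj_re _)
    calc c * ‖ψ‖ ^ 2 ≤ (inner ℂ η ψ : ℂ).re := by rw [← hsymm]; exact key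
      _ ≤ ‖(inner ℂ η ψ : ℂ)‖ := Complex.re_le_norm _

end
end

section
/- Let X be a complex Hilbert space, let D : dom(D) ⊆ X → X be a densely defined, closed, linear operator with ran(D) = X, let M, N ∈ L(X) be bounded linear operators, and let c_d, c_m > 0. Assume that Re⟨Dφ,φ⟩ ≥ c_d·⟨φ,φ⟩ and Re⟨Mφ,φ⟩ ≥ c_m·⟨φ,φ⟩ for all φ ∈ dom(D), and that ‖N‖ < c_d·c_m. Then: (a) the operator DM (with domain {x ∈ X : Mx ∈ dom(D)}, acting as x ↦ D(Mx)) is a bijection from its domain onto X with bounded inverse (DM)^{−1} ∈ L(X); (b) the operator B := DM − N (same domain, Bx = D(Mx) − Nx) is a bijection from its domain onto X, its inverse is the bounded operator given by the norm-convergent series B^{−1} = Σ_{k=0}^{∞} ((DM)^{−1} N)^{k} (DM)^{−1}, and ‖B^{−1}‖ ≤ 1/(c_d·c_m − ‖N‖). -/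
open MeasureTheory

noncomputable section

/-- Let `D` be densely defined, closed, onto, `M, N ∈ L(X)`,
`Re⟨Dφ,φ⟩ ≥ c_d⟨φ,φ⟩` and `Re⟨Mφ,φ⟩ ≥ c_m⟨φ,φ⟩` on `dom D`, and `‖N‖ < c_d c_m`.
Then `DM` is a bijection from `{x : Mx ∈ dom D}` onto `X` with bounded inverse `T`, and
`B = DM - N` is a bijection from the same domain onto `X` with bounded inverse given by
the norm-convergent series `B⁻¹ = Σ_k ((DM)⁻¹N)^k (DM)⁻¹` and
`‖B⁻¹‖ ≤ 1/(c_d c_m - ‖N‖)`. -/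
theorem statement13 {X : Type*}
    [NormedAddCommGroup X] [InnerProductSpace ℂ X] [CompleteSpace X]
    (D : X →ₗ.[ℂ] X) (hdense : Dense (D.domain : Set X)) (hclosed : D.IsClosed)
    (hsurj : ∀ y : X, ∃ x : D.domain, D x = y)
    (M N : X →L[ℂ] X) (cd cm : ℝ) (hcd : 0 < cd) (hcm : 0 < cm)
    (hD : ∀ φ : D.domain, cd * ‖(φ : X)‖ ^ 2 ≤ (inner ℂ (D φ) ((φ : X)) : ℂ).re)
    (hM : ∀ φ : D.domain, cm * ‖(φ : X)‖ ^ 2 ≤ (inner ℂ (M (φ : X)) ((φ : X)) : ℂ).re)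
    (hN : ‖N‖ < cd * cm) :
    ∃ T Binv : X →L[ℂ] X,
      (∀ y : X, ∃ h : M (T y) ∈ D.domain, D ⟨M (T y), h⟩ = y) ∧
      (∀ (x : X) (h : M x ∈ D.domain), T (D ⟨M x, h⟩) = x) ∧
      (∀ y : X, ∃ h : M (Binv y) ∈ D.domain, D ⟨M (Binv y), h⟩ - N (Binv y) = y) ∧
      (∀ (x : X) (h : M x ∈ D.domain), Binv (D ⟨M x, h⟩ - N x) = x) ∧
      HasSum (fun k : ℕ => ((T.comp N) ^ k).comp T) Binv ∧
      ‖Binv‖ ≤ 1 / (cd * cm - ‖N‖) := by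
  classical
  have reIn : ∀ u v : X, (inner ℂ u v : ℂ).re ≤ ‖u‖ * ‖v‖ := by
    intro u v
    calc (inner ℂ u v : ℂ).re ≤ ‖(inner ℂ u v : ℂ)‖ := Complex.re_le_norm _
      _ ≤ ‖u‖ * ‖v‖ := norm_inner_le_norm _ _
  -- D is injective on its domain
  have hDinj : ∀ φ ψ : D.domain, D φ = D ψ → φ = ψ := by
    intro φ ψ h
    have h0 : D (φ - ψ) = 0 := by rw [D.map_sub, h, sub_self]
    have h1 := hD (φ - ψ)
    rw [h0] at h1
    simp only [inner_zero_left, Complex.zero_re] at h1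
    have h2 : ‖((φ - ψ : D.domain) : X)‖ = 0 := by
      by_contra hne
      have hpos : 0 < ‖((φ - ψ : D.domain) : X)‖ :=
        (norm_nonneg _).lt_of_ne (Ne.symm hne)
      nlinarith [mul_pos hcd (pow_pos hpos 2)]
    have h3 : ((φ - ψ : D.domain) : X) = 0 := norm_eq_zero.mp h2
    have h4 : (φ : X) - (ψ : X) = 0 := by simpa using h3
    exact Subtype.ext (sub_eq_zero.mp h4)
  -- choice inverse of D
  set Sd : X → D.domain := fun y => (hsurj y).choose with hSd_def
  have hSd : ∀ y, D (Sd y) = y := fun y => (hsurj y).choose_spec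
  have hSb : ∀ y : X, cd * ‖(Sd y : X)‖ ≤ ‖y‖ := by
    intro y
    have h1 := hD (Sd y)
    rw [hSd y] at h1
    have h2 := reIn y (Sd y : X)
    nlinarith [norm_nonneg ((Sd y : X)), norm_nonneg y]
  have hadd : ∀ y z : X, (Sd (y + z) : X) = (Sd y : X) + (Sd z : X) := by
    intro y z
    have h : Sd (y + z) = Sd y + Sd z := by
      apply hDinj
      rw [hSd, D.map_add, hSd, hSd]
    exact_mod_cast congrArg Subtype.val h
  have hsmul : ∀ (c : ℂ) (y : X), (Sd (c • y) : X) = c • (Sd y : X) := by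
    intro c y
    have h : Sd (c • y) = c • Sd y := by
      apply hDinj
      rw [hSd, D.map_smul, hSd]
    exact_mod_cast congrArg Subtype.val h
  let Slin : X →ₗ[ℂ] X :=
    { toFun := fun y => (Sd y : X)
      map_add' := hadd
      map_smul' := hsmul }
  let S : X →L[ℂ] X := Slin.mkContinuous (1 / cd) (by
    intro y
    rw [div_mul_eq_mul_div, one_mul, le_div_iff₀ hcd]
    have := hSb y
    show ‖(Sd y : X)‖ * cd ≤ ‖y‖
    linarith)
  have hS_apply : ∀ y, S y = (Sd y : X) := fun _ => rfl
  -- M is coercive on all of X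
  have hM' : ∀ x : X, cm * ‖x‖ ^ 2 ≤ (inner ℂ (M x) x : ℂ).re := by
    have hcl : IsClosed {x : X | cm * ‖x‖ ^ 2 ≤ (inner ℂ (M x) x : ℂ).re} := by
      apply isClosed_le
      · exact continuous_const.mul (continuous_norm.pow 2)
      · exact Complex.continuous_re.comp (M.continuous.inner continuous_id)
    intro x
    have hsub : (D.domain : Set X) ⊆ {x : X | cm * ‖x‖ ^ 2 ≤ (inner ℂ (M x) x : ℂ).re} :=
      fun z hz => hM ⟨z, hz⟩
    have h := closure_minimal hsub hcl
    rw [hdense.closure_eq] at h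
    exact h (Set.mem_univ x)
  have hMb : ∀ x : X, cm * ‖x‖ ≤ ‖M x‖ := by
    intro x
    have h1 := hM' x
    have h2 := reIn (M x) x
    nlinarith [norm_nonneg x, norm_nonneg (M x)]
  -- M is bijective
  have hker : LinearMap.ker (M : X →ₗ[ℂ] X) = ⊥ := by
    rw [LinearMap.ker_eq_bot']
    intro x hx
    have h1 := hMb x
    rw [show M x = 0 from hx] at h1
    simp only [norm_zero] at h1
    have : ‖x‖ = 0 := le_antisymm (by nlinarith) (norm_nonneg x)
    exact norm_eq_zero.mp this
  have hanti : AntilipschitzWith (Real.toNNReal cm⁻¹) M := by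
    apply M.antilipschitz_of_bound
    intro x
    rw [Real.coe_toNNReal _ (by positivity), inv_mul_eq_div, le_div_iff₀ hcm]
    linarith [hMb x]
  have hrangeClosed : IsClosed (Set.range M) := hanti.isClosed_range M.uniformContinuous
  have hrange : LinearMap.range (M : X →ₗ[ℂ] X) = ⊤ := by
    have hIC : IsClosed ((LinearMap.range (M : X →ₗ[ℂ] X) : Submodule ℂ X) : Set X) := by
      have he : ((LinearMap.range (M : X →ₗ[ℂ] X) : Submodule ℂ X) : Set X) = Set.range M :=
        LinearMap.coe_range _
      rw [he]
      exact hrangeClosed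
    haveI : CompleteSpace (LinearMap.range (M : X →ₗ[ℂ] X)) := hIC.completeSpace_coe
    rw [← Submodule.orthogonal_eq_bot_iff]
    rw [Submodule.eq_bot_iff]
    intro y hy
    have h0 : (inner ℂ (M y) y : ℂ) = 0 :=
      (Submodule.mem_orthogonal _ _).mp hy (M y) (LinearMap.mem_range_self _ y)
    have h1 := hM' y
    rw [h0] at h1
    simp only [Complex.zero_re] at h1
    have hy0 : ‖y‖ = 0 := by
      by_contra hne
      have hpos : 0 < ‖y‖ := (norm_nonneg y).lt_of_ne (Ne.symm hne)
      nlinarith [mul_pos hcm (pow_pos hpos 2)]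
    exact norm_eq_zero.mp hy0
  let Me : X ≃L[ℂ] X := ContinuousLinearEquiv.ofBijective M hker hrange
  have hMe : ∀ x : X, Me x = M x := fun _ => rfl
  have hMeb : ∀ z : X, cm * ‖Me.symm z‖ ≤ ‖z‖ := by
    intro z
    have := hMb (Me.symm z)
    rwa [show M (Me.symm z) = z from Me.apply_symm_apply z] at this
  -- T = M⁻¹ D⁻¹
  let T : X →L[ℂ] X := (Me.symm : X →L[ℂ] X).comp S
  have hT_apply : ∀ y, T y = Me.symm (S y) := fun _ => rfl
  have hTb : ∀ y : X, ‖T y‖ ≤ 1 / (cd * cm) * ‖y‖ := by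
    intro y
    have h1 := hMeb ((Sd y : X))
    have h2 := hSb y
    have h3 : ‖T y‖ = ‖Me.symm ((Sd y : X))‖ := rfl
    rw [h3, div_mul_eq_mul_div, one_mul, le_div_iff₀ (by positivity)]
    nlinarith [norm_nonneg (Me.symm ((Sd y : X))), norm_nonneg ((Sd y : X)), norm_nonneg y,
      mul_le_mul_of_nonneg_left h1 hcd.le]
  have hT : ‖T‖ ≤ 1 / (cd * cm) := ContinuousLinearMap.opNorm_le_bound _ (by positivity) hTb
  -- key properties of T
  have hMT : ∀ y : X, M (T y) = (Sd y : X) := by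
    intro y
    show M (Me.symm (S y)) = (Sd y : X)
    rw [show M (Me.symm (S y)) = Me (Me.symm (S y)) from rfl, Me.apply_symm_apply]
    rfl
  have key1 : ∀ y : X, ∃ h : M (T y) ∈ D.domain, D ⟨M (T y), h⟩ = y := by
    intro y
    have hmem : M (T y) ∈ D.domain := by rw [hMT]; exact (Sd y).2
    refine ⟨hmem, ?_⟩
    have he : (⟨M (T y), hmem⟩ : D.domain) = Sd y := Subtype.ext (hMT y)
    rw [he, hSd]
  have key2 : ∀ (x : X) (h : M x ∈ D.domain), T (D ⟨M x, h⟩) = x := by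
    intro x h
    have hs : Sd (D ⟨M x, h⟩) = ⟨M x, h⟩ := hDinj _ _ (hSd _)
    show Me.symm (S (D ⟨M x, h⟩)) = x
    rw [hS_apply, hs]
    show Me.symm (M x) = x
    exact Me.symm_apply_apply x
  -- Neumann series
  set A : X →L[ℂ] X := T.comp N with hA_def
  have hA : ‖A‖ < 1 := by
    calc ‖A‖ ≤ ‖T‖ * ‖N‖ := ContinuousLinearMap.opNorm_comp_le _ _
      _ ≤ 1 / (cd * cm) * ‖N‖ := mul_le_mul_of_nonneg_right hT (norm_nonneg N)
      _ < 1 := by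
          rw [div_mul_eq_mul_div, one_mul, div_lt_one (by positivity)]
          exact hN
  set G : X →L[ℂ] X := ∑' n : ℕ, A ^ n with hG_def
  have hGsum : HasSum (fun n : ℕ => A ^ n) G := (summable_geometric_of_norm_lt_one hA).hasSum
  have hGA1 : (1 - A) * G = 1 := mul_neg_geom_series A hA
  have hGA2 : G * (1 - A) = 1 := geom_series_mul_neg A hA
  set Binv : X →L[ℂ] X := G.comp T with hBinv_def
  have hs : HasSum (fun k : ℕ => (A ^ k).comp T) Binv := by
    have h := (((ContinuousLinearMap.compL ℂ X X X).flip T).hasSum hGsum)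
    simpa using h
  -- B ∘ Binv = id
  have hAG : A * G = G - 1 := by
    have h := hGA1
    rw [sub_mul, one_mul] at h
    rw [← h]
    abel
  have hfix : ∀ y : X, T (y + N (Binv y)) = Binv y := by
    intro y
    have h1 : T (N (Binv y)) = (A * G) (T y) := rfl
    rw [map_add, h1, hAG]
    show T y + (G (T y) - T y) = Binv y
    rw [add_sub_cancel]
    rfl
  have key3 : ∀ y : X, ∃ h : M (Binv y) ∈ D.domain, D ⟨M (Binv y), h⟩ - N (Binv y) = y := by
    intro y
    obtain ⟨h, hDz⟩ := key1 (y + N (Binv y))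
    have h' : M (Binv y) ∈ D.domain := by rw [← hfix y]; exact h
    refine ⟨h', ?_⟩
    have he : (⟨M (Binv y), h'⟩ : D.domain) = ⟨M (T (y + N (Binv y))), h⟩ :=
      Subtype.ext (show M (Binv y) = M (T (y + N (Binv y))) from (congrArg M (hfix y)).symm)
    rw [he, hDz]
    exact add_sub_cancel_right y (N (Binv y))
  have key4 : ∀ (x : X) (h : M x ∈ D.domain), Binv (D ⟨M x, h⟩ - N x) = x := by
    intro x h
    have hTy : T (D ⟨M x, h⟩ - N x) = x - A x := by
      rw [map_sub, key2 x h]; rfl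
    calc Binv (D ⟨M x, h⟩ - N x) = G (T (D ⟨M x, h⟩ - N x)) := rfl
      _ = G ((1 - A) x) := by
          rw [hTy]
          congr 1
      _ = (G * (1 - A)) x := rfl
      _ = x := by rw [hGA2]; rfl
  -- norm bound
  have hGnorm : ‖G‖ ≤ (1 - ‖A‖)⁻¹ := by
    have h1 := tsum_geometric_le_of_norm_lt_one A hA
    have h2 : ‖(1 : X →L[ℂ] X)‖ ≤ 1 := ContinuousLinearMap.norm_id_le
    rw [← hG_def] at h1
    linarith
  have hnorm : ‖Binv‖ ≤ 1 / (cd * cm - ‖N‖) := by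
    have hA1 : (0:ℝ) < 1 - ‖A‖ := by linarith
    have hN1 : (0:ℝ) < cd * cm - ‖N‖ := by linarith
    have hat : ‖A‖ ≤ ‖T‖ * ‖N‖ := ContinuousLinearMap.opNorm_comp_le _ _
    have ht1 : ‖T‖ * (cd * cm) ≤ 1 := by
      rw [le_div_iff₀ (by positivity : (0:ℝ) < cd * cm)] at hT
      linarith
    calc ‖Binv‖ ≤ ‖G‖ * ‖T‖ := ContinuousLinearMap.opNorm_comp_le _ _
      _ ≤ (1 - ‖A‖)⁻¹ * ‖T‖ :=
          mul_le_mul_of_nonneg_right hGnorm (norm_nonneg T)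
      _ ≤ 1 / (cd * cm - ‖N‖) := by
          rw [inv_mul_eq_div, div_le_div_iff₀ hA1 hN1, one_mul]
          nlinarith [norm_nonneg T, norm_nonneg N]
  exact ⟨T, Binv, key1, key2, key3, key4, hs, hnorm⟩

end
end

section
/- Let X be a complex Hilbert space and let D : dom(D) ⊆ X → X be a densely defined, closed, linear operator which is a bijection from dom(D) onto X with bounded inverse (i.e., 0 ∈ ρ(D)). Let I be an index type carrying a filter F ≠ ⊥ (modelling a directed net), let M, M' : I → L(X), N ∈ L(X), r > 0, and assume: (i) M_ι → N in the weak operator topology along F, i.e., for all x, y ∈ X, ⟨y, M_ι x⟩ → ⟨y, N x⟩ along F; (ii) ‖M'_ι‖ ≤ r for all ι; (iii) for every ι and every u ∈ dom(D): M_ι u ∈ dom(D) and M_ι(D u) = D(M_ι u) − M'_ι u. Then there exists N' ∈ L(X) with ‖N'‖ ≤ r such that M'_ι → N' in the weak operator topology along F, for every u ∈ dom(D) one has N u ∈ dom(D) and N(D u) = D(N u) − N' u, and moreover for every u ∈ dom(D), D(M_ι u) converges weakly to D(N u) along F (i.e., ⟨y, D(M_ι u)⟩ → ⟨y, D(N u)⟩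 for all y ∈ X). -/
open Filter Topology ContinuousLinearMap
open scoped InnerProductSpace ComplexConjugate

/-- Let `D` be a densely defined, closed linear operator in `X` which
is a bijection onto `X` with bounded inverse, and let `(M_ι)` be a net of bounded
operators converging to `N` in the weak operator topology such that the commutators
`M'_ι` with `M_ι D ⊆ D M_ι − M'_ι` are uniformly bounded by `r`.  Then the `M'_ι`
converge in the weak operator topology to some `N'` with `‖N'‖ ≤ r`,
`N D ⊆ D N − N'`, and `D(M_ι u)` converges weakly to `D(N u)` for `u ∈ dom D`. -/
theorem statement17 {X : Type*}
    [NormedAddCommGroup X] [InnerProductSpace ℂ X] [CompleteSpace X]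
    (D : X →ₗ.[ℂ] X) (hdense : Dense (D.domain : Set X)) (hclosed : D.IsClosed)
    (hsurj : ∀ y : X, ∃ x : D.domain, D x = y)
    (hinv : ∃ C : ℝ, ∀ x : D.domain, ‖(x : X)‖ ≤ C * ‖D x‖)
    {I : Type*} (F : Filter I) [F.NeBot]
    (M M' : I → X →L[ℂ] X) (N : X →L[ℂ] X) (r : ℝ) (hr : 0 < r)
    (hMconv : ∀ x y : X,
      Tendsto (fun ι => (inner ℂ y (M ι x) : ℂ)) F (𝓝 (inner ℂ y (N x))))
    (hM'bd : ∀ ι : I, ‖M' ι‖ ≤ r)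
    (hcomm : ∀ (ι : I) (u : D.domain), ∃ h : M ι (u : X) ∈ D.domain,
      M ι (D u) = D ⟨M ι (u : X), h⟩ - M' ι (u : X)) :
    ∃ N' : X →L[ℂ] X, ‖N'‖ ≤ r ∧
      (∀ x y : X,
        Tendsto (fun ι => (inner ℂ y (M' ι x) : ℂ)) F (𝓝 (inner ℂ y (N' x)))) ∧
      (∀ u : D.domain, ∃ h : N (u : X) ∈ D.domain,
        N (D u) = D ⟨N (u : X), h⟩ - N' (u : X)) ∧
      (∀ (u : D.domain) (y : X),
        Tendsto (fun ι => (inner ℂ y (M ι (D u) + M' ι (u : X)) : ℂ)) F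
          (𝓝 (inner ℂ y (N (D u) + N' (u : X))))) := by
  obtain ⟨C, hC⟩ := hinv
  have hinj : Function.Injective D.toFun := by
    intro a b hab
    have h0 : D.toFun (a - b) = 0 := by rw [map_sub, hab, sub_self]
    have := hC (a - b)
    rw [show D (a-b) = D.toFun (a-b) from rfl, h0] at this
    simp at this
    exact sub_eq_zero.mp (by exact_mod_cast this)
  have hbij : Function.Bijective D.toFun := ⟨hinj, fun y => (hsurj y).imp fun x hx => hx⟩
  set e := LinearEquiv.ofBijective D.toFun hbij with he
  set Tlin : X →ₗ[ℂ] X := D.domain.subtype ∘ₗ (e.symm : X →ₗ[ℂ] D.domain) with hTlin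
  have hTbd : ∀ y : X, ‖Tlin y‖ ≤ C * ‖y‖ := by
    intro y
    have : ‖(e.symm y : X)‖ ≤ C * ‖D (e.symm y)‖ := hC _
    rwa [show D (e.symm y) = e (e.symm y) from rfl, e.apply_symm_apply] at this
  set T : X →L[ℂ] X := Tlin.mkContinuous C hTbd with hT
  have hTmem : ∀ y : X, T y ∈ D.domain := fun y => (e.symm y).2
  have hTD : ∀ y : X, D ⟨T y, hTmem y⟩ = y := by
    intro y
    have : (⟨T y, hTmem y⟩ : D.domain) = e.symm y := Subtype.ext rfl
    rw [this, show D (e.symm y) = e (e.symm y) from rfl, e.apply_symm_apply]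
  have hTDu : ∀ u : D.domain, T (D u) = u := by
    intro u
    show ((e.symm (e u) : D.domain) : X) = u
    rw [e.symm_apply_apply]
  set A : X →L[ℂ] X := ContinuousLinearMap.adjoint T with hA
  have hAT : ∀ (z x : X), ⟪A z, x⟫_ℂ = ⟪z, T x⟫_ℂ := fun z x =>
    ContinuousLinearMap.adjoint_inner_left T x z
  have hAD : ∀ (z : X) (u : D.domain), ⟪A z, D u⟫_ℂ = ⟪z, (u : X)⟫_ℂ := by
    intro z u
    rw [hAT, hTDu]
  have hdenseA : Dense ((LinearMap.range (A : X →ₗ[ℂ] X) : Submodule ℂ X) : Set X) := by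
    rw [Submodule.dense_iff_topologicalClosure_eq_top,
      Submodule.topologicalClosure_eq_top_iff, Submodule.eq_bot_iff]
    intro x hx
    have hTx : T x = 0 := by
      have h1 : ⟪A (T x), x⟫_ℂ = 0 := hx _ ⟨T x, rfl⟩
      rw [hAT] at h1
      exact inner_self_eq_zero.mp h1
    have : (e.symm x : X) = ((0 : D.domain) : X) := hTx
    have h2 : e.symm x = 0 := Subtype.ext this
    calc x = e (e.symm x) := (e.apply_symm_apply x).symm
    _ = 0 := by rw [h2, map_zero]
  -- uniform bound on M'
  have hM'x : ∀ (ι : I) (x : X), ‖M' ι x‖ ≤ r * ‖x‖ := fun ι x =>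
    le_trans ((M' ι).le_opNorm x) (mul_le_mul_of_nonneg_right (hM'bd ι) (norm_nonneg x))
  -- the commutator formula
  have hcomm' : ∀ (ι : I) (u : D.domain),
      M' ι (u : X) = D ⟨M ι (u : X), (hcomm ι u).choose⟩ - M ι (D u) := by
    intro ι u
    have := (hcomm ι u).choose_spec
    rw [eq_sub_iff_add_eq] at this ⊢
    rw [add_comm, ← this]
  -- convergence at nice pairs
  have key1 : ∀ (u : D.domain) (z : X),
      Tendsto (fun ι => ⟪A z, M' ι (u : X)⟫_ℂ) F
        (𝓝 (⟪z, N (u : X)⟫_ℂ - ⟪A z, N (D u)⟫_ℂ)) := by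
    intro u z
    have heq : ∀ ι, ⟪A z, M' ι (u : X)⟫_ℂ = ⟪z, M ι (u : X)⟫_ℂ - ⟪A z, M ι (D u)⟫_ℂ := by
      intro ι
      rw [hcomm' ι u, inner_sub_right, hAD]
    simp only [heq]
    exact (hMconv u z).sub (hMconv (D u) (A z))
  -- difference estimate
  have hdiff : ∀ (ι : I) (x y u z : X),
      dist (⟪y, M' ι x⟫_ℂ) (⟪A z, M' ι u⟫_ℂ) ≤ r * ‖y‖ * ‖x - u‖ + r * ‖y - A z‖ * ‖u‖ := by
    intro ι x y u z
    rw [dist_eq_norm]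
    have h1 : ⟪y, M' ι x⟫_ℂ - ⟪A z, M' ι u⟫_ℂ
        = ⟪y, M' ι (x - u)⟫_ℂ + ⟪y - A z, M' ι u⟫_ℂ := by
      rw [map_sub, inner_sub_right, inner_sub_left]; ring
    rw [h1]
    refine (norm_add_le _ _).trans (add_le_add ?_ ?_)
    · refine (norm_inner_le_norm _ _).trans ?_
      calc ‖y‖ * ‖M' ι (x - u)‖ ≤ ‖y‖ * (r * ‖x - u‖) :=
            mul_le_mul_of_nonneg_left (hM'x ι _) (norm_nonneg y)
      _ = r * ‖y‖ * ‖x - u‖ := by ring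
    · refine (norm_inner_le_norm _ _).trans ?_
      calc ‖y - A z‖ * ‖M' ι u‖ ≤ ‖y - A z‖ * (r * ‖u‖) :=
            mul_le_mul_of_nonneg_left (hM'x ι _) (norm_nonneg _)
      _ = r * ‖y - A z‖ * ‖u‖ := by ring
  -- existence of the limit for all pairs
  have key : ∀ x y : X, ∃ l : ℂ, Tendsto (fun ι => ⟪y, M' ι x⟫_ℂ) F (𝓝 l) := by
    intro x y
    rw [← cauchy_map_iff_exists_tendsto]
    refine Metric.cauchy_iff.mpr ⟨map_neBot, ?_⟩
    intro ε hε
    set δ₁ : ℝ := min 1 (ε / (6 * (r * (‖y‖ + 1)))) with hδ₁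
    have hry : 0 < r * (‖y‖ + 1) := mul_pos hr (by positivity)
    have hδ₁pos : 0 < δ₁ := lt_min one_pos (by positivity)
    obtain ⟨u, humem, hu⟩ := Metric.mem_closure_iff.mp (hdense x) δ₁ hδ₁pos
    rw [dist_eq_norm] at hu
    lift u to D.domain using humem with u hu'
    have hunorm : ‖(u : X)‖ ≤ ‖x‖ + 1 := by
      have h5 := norm_sub_norm_le (u : X) x
      rw [norm_sub_rev] at h5
      have h6 := lt_of_lt_of_le hu (min_le_left _ _)
      linarith
    set δ₂ : ℝ := ε / (6 * (r * (‖x‖ + 2))) with hδ₂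
    have hrx : 0 < r * (‖x‖ + 2) := mul_pos hr (by positivity)
    have hδ₂pos : 0 < δ₂ := by positivity
    obtain ⟨z', hz'mem, hz'⟩ := Metric.mem_closure_iff.mp (hdenseA y) δ₂ hδ₂pos
    obtain ⟨z, rfl⟩ := hz'mem
    rw [dist_eq_norm] at hz'
    -- the approximation error is < ε/3
    have happrox : ∀ ι, dist (⟪y, M' ι x⟫_ℂ) (⟪A z, M' ι (u : X)⟫_ℂ) < ε / 3 := by
      intro ι
      refine lt_of_le_of_lt (hdiff ι x y (u : X) z) ?_
      have h1 : r * ‖y‖ * ‖x - (u : X)‖ ≤ ε / 6 := by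
        have hd : δ₁ ≤ ε / (6 * (r * (‖y‖ + 1))) := min_le_right _ _
        have h3 : r * ‖y‖ * ‖x - (u : X)‖ ≤ r * (‖y‖ + 1) * δ₁ := by
          have h2 : ‖x - (u : X)‖ ≤ δ₁ := hu.le
          nlinarith [norm_nonneg y, norm_nonneg (x - (u : X)), hr.le]
        calc r * ‖y‖ * ‖x - (u : X)‖ ≤ r * (‖y‖ + 1) * δ₁ := h3
        _ ≤ r * (‖y‖ + 1) * (ε / (6 * (r * (‖y‖ + 1)))) :=
            mul_le_mul_of_nonneg_left hd hry.le
        _ = ε / 6 := by field_simp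
      have h2 : r * ‖y - A z‖ * ‖(u : X)‖ < ε / 6 := by
        calc r * ‖y - A z‖ * ‖(u : X)‖ ≤ r * ‖y - A z‖ * (‖x‖ + 2) :=
            mul_le_mul_of_nonneg_left (hunorm.trans (by linarith)) (by positivity)
        _ < r * δ₂ * (‖x‖ + 2) :=
            mul_lt_mul_of_pos_right (mul_lt_mul_of_pos_left hz' hr) (by positivity)
        _ = ε / 6 := by rw [hδ₂]; field_simp
      linarith
    obtain ⟨s, hsF, hs⟩ := (Metric.tendsto_nhds.mp (key1 u z) (ε / 6)
      (by linarith)).exists_mem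
    refine ⟨(fun ι => ⟪y, M' ι x⟫_ℂ) '' s, image_mem_map hsF, ?_⟩
    rintro _ ⟨ι, hι, rfl⟩ _ ⟨κ, hκ, rfl⟩
    have hι3 := hs ι hι
    have hκ3 := hs κ hκ
    have htri := dist_triangle4 (⟪y, M' ι x⟫_ℂ) (⟪A z, M' ι (u : X)⟫_ℂ)
      (⟪A z, M' κ (u : X)⟫_ℂ) (⟪y, M' κ x⟫_ℂ)
    have hmid := dist_triangle_right (⟪A z, M' ι (u : X)⟫_ℂ) (⟪A z, M' κ (u : X)⟫_ℂ)
      (⟪z, N (u : X)⟫_ℂ - ⟪A z, N (D u)⟫_ℂ)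
    have hsym : dist (⟪A z, M' κ (u : X)⟫_ℂ) (⟪y, M' κ x⟫_ℂ)
        = dist (⟪y, M' κ x⟫_ℂ) (⟪A z, M' κ (u : X)⟫_ℂ) := dist_comm _ _
    have hap1 := happrox ι
    have hap2 := happrox κ
    linarith
  -- the limit function
  choose c tendsto_c using key
  have tendsto_conj : ∀ x y : X,
      Tendsto (fun ι => ⟪M' ι x, y⟫_ℂ) F (𝓝 (conj (c x y))) := by
    intro x y
    have h1 : Tendsto (fun ι => conj (⟪y, M' ι x⟫_ℂ)) F (𝓝 (conj (c x y))) :=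
      (Complex.continuous_conj.tendsto _).comp (tendsto_c x y)
    simpa only [inner_conj_symm] using h1
  have cbound : ∀ x y : X, ‖c x y‖ ≤ r * ‖x‖ * ‖y‖ := by
    intro x y
    refine le_of_tendsto (tendsto_c x y).norm (Eventually.of_forall fun ι => ?_)
    calc ‖⟪y, M' ι x⟫_ℂ‖ ≤ ‖y‖ * ‖M' ι x‖ := norm_inner_le_norm _ _
    _ ≤ ‖y‖ * (r * ‖x‖) := mul_le_mul_of_nonneg_left (hM'x ι x) (norm_nonneg y)
    _ = r * ‖x‖ * ‖y‖ := by ring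
  -- construct the weak limit N0 via Riesz representation
  have hlin : ∀ x : X, ∃ w : X, (∀ y : X, ⟪y, w⟫_ℂ = c x y) ∧ ‖w‖ ≤ r * ‖x‖ := by
    intro x
    have hmadd : ∀ y y' : X, conj (c x (y + y')) = conj (c x y) + conj (c x y') := by
      intro y y'
      refine tendsto_nhds_unique (tendsto_conj x (y + y')) ?_
      simpa only [inner_add_right] using (tendsto_conj x y).add (tendsto_conj x y')
    have hmsmul : ∀ (a : ℂ) (y : X), conj (c x (a • y)) = a * conj (c x y) := by
      intro a y
      refine tendsto_nhds_unique (tendsto_conj x (a • y)) ?_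
      simpa only [inner_smul_right] using (tendsto_conj x y).const_mul a
    set φ : X →ₗ[ℂ] ℂ :=
      { toFun := fun y => conj (c x y)
        map_add' := hmadd
        map_smul' := fun a y => hmsmul a y } with hφ
    have hφbd : ∀ y : X, ‖φ y‖ ≤ r * ‖x‖ * ‖y‖ := by
      intro y
      have : ‖φ y‖ = ‖c x y‖ := RCLike.norm_conj _
      rw [this]
      exact cbound x y
    set φc : X →L[ℂ] ℂ := φ.mkContinuous (r * ‖x‖) hφbd with hφc
    refine ⟨(InnerProductSpace.toDual ℂ X).symm φc, fun y => ?_, ?_⟩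
    · rw [← inner_conj_symm, InnerProductSpace.toDual_symm_apply]
      exact Complex.conj_conj _
    · rw [LinearIsometryEquiv.norm_map]
      exact φ.mkContinuous_norm_le (by positivity) hφbd
  choose N0 hN0 hN0norm using hlin
  -- linearity of N0
  have cadd : ∀ x x' v : X, c (x + x') v = c x v + c x' v := by
    intro x x' v
    refine tendsto_nhds_unique (tendsto_c (x + x') v) ?_
    simpa only [map_add, inner_add_right] using (tendsto_c x v).add (tendsto_c x' v)
  have csmul : ∀ (a : ℂ) (x v : X), c (a • x) v = a * c x v := by
    intro a x v
    refine tendsto_nhds_unique (tendsto_c (a • x) v) ?_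
    simpa only [map_smul, inner_smul_right] using (tendsto_c x v).const_mul a
  have hN0add : ∀ x x' : X, N0 (x + x') = N0 x + N0 x' := by
    intro x x'
    refine ext_inner_left ℂ fun v => ?_
    rw [hN0, inner_add_right, hN0, hN0, cadd]
  have hN0smul : ∀ (a : ℂ) (x : X), N0 (a • x) = a • N0 x := by
    intro a x
    refine ext_inner_left ℂ fun v => ?_
    rw [hN0, inner_smul_right, hN0, csmul]
  set N'lin : X →ₗ[ℂ] X :=
    { toFun := N0
      map_add' := hN0add
      map_smul' := hN0smul } with hN'lin
  set N' : X →L[ℂ] X := N'lin.mkContinuous r hN0norm with hN'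
  have hN'app : ∀ x : X, N' x = N0 x := fun _ => rfl
  have hN'inner : ∀ x y : X, (inner ℂ y (N' x) : ℂ) = c x y := fun x y => hN0 x y
  refine ⟨N', N'lin.mkContinuous_norm_le hr.le hN0norm, ?_, ?_, ?_⟩
  · intro x y
    rw [hN'inner]
    exact tendsto_c x y
  · intro u
    set w : X := N (D u) + N0 (u : X) with hw
    have hNu : N (u : X) = T w := by
      refine ext_inner_left ℂ fun v => ?_
      refine tendsto_nhds_unique (hMconv (u : X) v) ?_
      have heq : ∀ ι, ⟪v, M ι (u : X)⟫_ℂ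
          = ⟪A v, M ι (D u)⟫_ℂ + ⟪A v, M' ι (u : X)⟫_ℂ := by
        intro ι
        obtain ⟨h, hc⟩ := hcomm ι u
        have hD : D ⟨M ι (u : X), h⟩ = M ι (D u) + M' ι (u : X) := by
          rw [hc]; abel
        have hMeq : M ι (u : X) = T (M ι (D u) + M' ι (u : X)) := by
          rw [← hD, hTDu]
        rw [hMeq, ← hAT, inner_add_right]
      simp only [heq]
      have h2 : Tendsto (fun ι => ⟪A v, M ι (D u)⟫_ℂ + ⟪A v, M' ι (u : X)⟫_ℂ) F
          (𝓝 (⟪A v, N (D u)⟫_ℂ + c (u : X) (A v))) :=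
        (hMconv (D u) (A v)).add (tendsto_c (u : X) (A v))
      have h3 : ⟪A v, N (D u)⟫_ℂ + c (u : X) (A v) = ⟪v, T w⟫_ℂ := by
        rw [← hN0, ← inner_add_right, ← hw, hAT]
      rwa [h3] at h2
    have hNmem : N (u : X) ∈ D.domain := hNu ▸ hTmem w
    refine ⟨hNmem, ?_⟩
    have hsub : (⟨N (u : X), hNmem⟩ : D.domain) = ⟨T w, hTmem w⟩ := Subtype.ext hNu
    rw [hsub, hTD, hw, hN'app]
    abel
  · intro u y
    simp only [inner_add_right]
    refine (hMconv (D u) y).add ?_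
    rw [hN'inner]
    exact tendsto_c (u : X) y
end

section
/- Let X, Y be complex Hilbert spaces and let S : dom(S) ⊆ X → Y be a densely defined, closed, linear operator. Assume that the embedding of dom(S), equipped with the graph norm ‖x‖_S = (‖x‖² + ‖Sx‖²)^{1/2}, into X is compact, i.e., every sequence (x_n) in dom(S) with sup_n (‖x_n‖ + ‖S x_n‖) < ∞ has a subsequence converging in X. Then the embedding of dom(S*) ∩ ker(S*)^⊥, equipped with the graph norm of S*, into Y is compact, i.e., every sequence (y_n) in dom(S*) with y_n orthogonal to ker(S*) for all n and sup_n (‖y_n‖ + ‖S* y_n‖) < ∞ has a subsequence converging in Y. -/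
open Filter Topology

/-- Let `S : dom S ⊆ X → Y` be densely defined, closed and linear with
compact embedding of `(dom S, graph norm)` into `X` (stated sequentially).  Then the
embedding of `dom(S*) ∩ ker(S*)^⊥` (with graph norm of `S*`, the adjoint being described
via its defining property) into `Y` is compact: every graph-norm bounded sequence
`(y_n)` in `dom(S*)` orthogonal to `ker(S*)` has a subsequence converging in `Y`. -/
theorem statement18 {X Y : Type*}
    [NormedAddCommGroup X] [InnerProductSpace ℂ X] [CompleteSpace X]
    [NormedAddCommGroup Y] [InnerProductSpace ℂ Y] [CompleteSpace Y]
    (S : X →ₗ.[ℂ] Y) (hdense : Dense (S.domain : Set X)) (hclosed : S.IsClosed)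
    (hcpt : ∀ x : ℕ → S.domain, (∃ C : ℝ, ∀ n, ‖(x n : X)‖ + ‖S (x n)‖ ≤ C) →
      ∃ g : ℕ → ℕ, StrictMono g ∧ ∃ l : X,
        Tendsto (fun n => ((x (g n) : X))) atTop (𝓝 l)) :
    ∀ (y : ℕ → Y) (η : ℕ → X),
      (∀ n, ∀ φ : S.domain, (inner ℂ (S φ) (y n) : ℂ) = inner ℂ ((φ : X)) (η n)) →
      (∀ n, ∀ z : Y, (∀ φ : S.domain, (inner ℂ (S φ) z : ℂ) = 0) →
        (inner ℂ (y n) z : ℂ) = 0) →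
      (∃ C : ℝ, ∀ n, ‖y n‖ + ‖η n‖ ≤ C) →
      ∃ g : ℕ → ℕ, StrictMono g ∧ ∃ l : Y, Tendsto (fun n => y (g n)) atTop (𝓝 l) := by
  classical
  intro y η hadj horth hbdd
  obtain ⟨C, hC⟩ := hbdd
  have hC0 : 0 ≤ C := le_trans (by positivity) (hC 0)
  -- the kernel of S as a submodule of X
  set N : Submodule ℂ X := S.graph.comap ((LinearMap.id : X →ₗ[ℂ] X).prod 0) with hNdef
  have hNmem : ∀ x : X, x ∈ N ↔ (x, (0 : Y)) ∈ S.graph := by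
    intro x
    rfl
  have hNclosed : IsClosed (N : Set X) := by
    have : (N : Set X) = (fun x : X => (x, (0 : Y))) ⁻¹' (S.graph : Set (X × Y)) := rfl
    rw [this]
    exact hclosed.preimage (continuous_id.prodMk continuous_const)
  have hNsubdom : ∀ x : X, x ∈ N → x ∈ S.domain := by
    intro x hx
    rw [hNmem, LinearPMap.mem_graph_iff] at hx
    obtain ⟨u, hu1, hu2⟩ := hx
    have hu1' : (u : X) = x := hu1
    rw [← hu1']; exact u.2
  have hNS : ∀ u : S.domain, (u : X) ∈ N → S u = 0 := by
    intro u hu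
    rw [hNmem, LinearPMap.mem_graph_iff] at hu
    obtain ⟨w, hw1, hw2⟩ := hu
    have : w = u := Subtype.ext hw1
    rw [← this]; exact hw2
  -- graph limits: if (x_n, S x_n) → (l, m) then l ∈ dom S and S l = m
  have hgraph : ∀ (x : ℕ → S.domain) (l : X) (m : Y),
      Tendsto (fun n => ((x n : X))) atTop (𝓝 l) →
      Tendsto (fun n => S (x n)) atTop (𝓝 m) →
      ∃ hl : l ∈ S.domain, S ⟨l, hl⟩ = m := by
    intro x l m hxl hxm
    have hmem : (l, m) ∈ S.graph := by
      have := hclosed.mem_of_tendsto (hxl.prodMk_nhds hxm)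
        (Eventually.of_forall fun n => S.mem_graph (x n))
      exact this
    rw [LinearPMap.mem_graph_iff] at hmem
    obtain ⟨w, hw1, hw2⟩ := hmem
    have hw1' : (w : X) = l := hw1
    exact ⟨hw1' ▸ w.2, by rw [show (⟨l, _⟩ : S.domain) = w from Subtype.ext hw1'.symm]; exact hw2⟩
  -- Step 1: the coercivity estimate on N^⊥ ∩ dom S
  have key : ∃ C₁ : ℝ, 0 ≤ C₁ ∧ ∀ x : S.domain, (x : X) ∈ Nᗮ → ‖(x : X)‖ ≤ C₁ * ‖S x‖ := by
    by_contra h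
    push_neg at h
    have h' : ∀ n : ℕ, ∃ x : S.domain, (x : X) ∈ Nᗮ ∧ ((n : ℝ) + 1) * ‖S x‖ < ‖(x : X)‖ := by
      intro n
      rcases h ((n : ℝ) + 1) (by positivity) with ⟨x, hx1, hx2⟩
      exact ⟨x, hx1, hx2⟩
    choose u hu1 hu2 using h'
    have hupos : ∀ n, 0 < ‖(u n : X)‖ := by
      intro n
      have := hu2 n
      nlinarith [norm_nonneg (S (u n)), norm_nonneg ((u n : X))]
    set v : ℕ → S.domain := fun n => ((‖(u n : X)‖)⁻¹ : ℂ) • u n with hvdef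
    have hvcoe : ∀ n, ((v n : X)) = ((‖(u n : X)‖)⁻¹ : ℂ) • (u n : X) := fun n => rfl
    have hvnorm : ∀ n, ‖(v n : X)‖ = 1 := by
      intro n
      rw [hvcoe, norm_smul]
      have : ‖((‖(u n : X)‖ : ℂ))⁻¹‖ = (‖(u n : X)‖)⁻¹ := by
        rw [norm_inv, Complex.norm_real, norm_norm]
      rw [this, inv_mul_cancel₀ (hupos n).ne']
    have hvS : ∀ n, ‖S (v n)‖ < ((n : ℝ) + 1)⁻¹ := by
      intro n
      have hSv : S (v n) = ((‖(u n : X)‖)⁻¹ : ℂ) • S (u n) := by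
        rw [hvdef]; exact S.map_smul _ _
      have h3 : (0:ℝ) < (n:ℝ) + 1 := by positivity
      rw [hSv, norm_smul]
      have h1 : ‖((‖(u n : X)‖ : ℂ))⁻¹‖ = (‖(u n : X)‖)⁻¹ := by
        rw [norm_inv, Complex.norm_real, norm_norm]
      rw [h1, inv_mul_lt_iff₀ (hupos n), ← div_eq_mul_inv, lt_div_iff₀ h3]
      nlinarith [hu2 n]
    have hvmem : ∀ n, (v n : X) ∈ Nᗮ := by
      intro n
      rw [hvcoe]
      exact Submodule.smul_mem _ _ (hu1 n)
    obtain ⟨g, hg, l, hl⟩ := hcpt v ⟨2, by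
      intro n
      have := hvS n
      have h2 : ((n:ℝ)+1)⁻¹ ≤ 1 := by
        rw [inv_le_one_iff₀]; right; linarith [Nat.cast_nonneg (α := ℝ) n]
      rw [hvnorm n]; linarith⟩
    have hSl : Tendsto (fun n => S (v (g n))) atTop (𝓝 (0 : Y)) := by
      refine squeeze_zero_norm (f := fun n => S (v (g n))) (a := fun n => ((n : ℝ) + 1)⁻¹) (fun n => ?_) ?_
      · refine le_trans (le_of_lt (hvS (g n))) ?_
        have : (n : ℝ) + 1 ≤ (g n : ℝ) + 1 := by
          have h4 : n ≤ g n := hg.le_apply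
          have h5 : (n : ℝ) ≤ (g n : ℝ) := by exact_mod_cast h4
          linarith
        exact inv_anti₀ (by positivity) this
      · exact (tendsto_one_div_add_atTop_nhds_zero_nat (𝕜 := ℝ)).congr (fun n => one_div _)
    obtain ⟨hldom, hlS⟩ := hgraph (fun n => v (g n)) l 0 hl hSl
    -- l ∈ N
    have hlN : l ∈ N := by
      rw [hNmem, LinearPMap.mem_graph_iff]
      exact ⟨⟨l, hldom⟩, rfl, hlS⟩
    -- l ∈ Nᗮ
    have hlNperp : l ∈ Nᗮ := by
      have : IsClosed ((Nᗮ : Submodule ℂ X) : Set X) := Submodule.isClosed_orthogonal N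
      exact this.mem_of_tendsto hl (Eventually.of_forall fun n => hvmem (g n))
    have hl0 : l = 0 := by
      have := (Submodule.mem_orthogonal N l).1 hlNperp l hlN
      exact inner_self_eq_zero.1 this
    have hnorml : ‖l‖ = 1 := by
      have h1 : Tendsto (fun n => ‖(v (g n) : X)‖) atTop (𝓝 ‖l‖) := hl.norm
      have h2 : (fun n => ‖(v (g n) : X)‖) = fun _ => (1 : ℝ) := by
        funext n; exact hvnorm (g n)
      rw [h2] at h1
      exact (tendsto_const_nhds_iff.1 h1).symm
    rw [hl0, norm_zero] at hnorml
    norm_num at hnorml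
  obtain ⟨C₁, hC₁0, hC₁⟩ := key
  -- Step 2: every element of the closure of ran S is S x for some x ∈ N^⊥
  haveI : CompleteSpace N := hNclosed.completeSpace_coe
  have hrange : ∀ w : Y, w ∈ closure ((LinearMap.range S.toFun : Submodule ℂ Y) : Set Y) →
      ∃ x : S.domain, (x : X) ∈ Nᗮ ∧ S x = w := by
    intro w hw
    rw [mem_closure_iff_seq_limit] at hw
    obtain ⟨wseq, hwmem, hwlim⟩ := hw
    choose vseq hvseq using hwmem
    -- project off the kernel
    have hproj : ∀ k : ℕ, ∃ x : S.domain, (x : X) ∈ Nᗮ ∧ S x = wseq k := by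
      intro k
      set p : X := (N.orthogonalProjectionOnto ((vseq k : X)) : X) with hpdef
      have hpN : p ∈ N := (N.orthogonalProjectionOnto ((vseq k : X))).2
      have hpdom : p ∈ S.domain := hNsubdom p hpN
      refine ⟨⟨(vseq k : X) - p, sub_mem (vseq k).2 hpdom⟩, ?_, ?_⟩
      · exact Submodule.sub_starProjection_mem_orthogonal (K := N) _
      · have : (⟨(vseq k : X) - p, _⟩ : S.domain) = vseq k - ⟨p, hpdom⟩ := rfl
        rw [this, LinearPMap.map_sub, hNS ⟨p, hpdom⟩ hpN, sub_zero]
        exact hvseq k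
    choose xseq hx1 hx2 using hproj
    -- xseq is Cauchy
    have hcauchy : CauchySeq (fun k => (xseq k : X)) := by
      rw [Metric.cauchySeq_iff]
      intro ε hε
      have hwc : CauchySeq wseq := hwlim.cauchySeq
      rw [Metric.cauchySeq_iff] at hwc
      obtain ⟨M, hM⟩ := hwc (ε / (C₁ + 1)) (by positivity)
      refine ⟨M, fun a ha b hb => ?_⟩
      have hsub : ((xseq a : X) - (xseq b : X)) ∈ Nᗮ := sub_mem (hx1 a) (hx1 b)
      have hd : (⟨(xseq a : X) - (xseq b : X), sub_mem (xseq a).2 (xseq b).2⟩ : S.domain)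
          = xseq a - xseq b := rfl
      have hest := hC₁ (xseq a - xseq b) hsub
      rw [LinearPMap.map_sub, hx2 a, hx2 b] at hest
      have hdw : dist (wseq a) (wseq b) < ε / (C₁ + 1) := hM a ha b hb
      rw [dist_eq_norm] at hdw ⊢
      have hcoe : ((xseq a - xseq b : S.domain) : X) = (xseq a : X) - (xseq b : X) := rfl
      rw [← hcoe]
      calc ‖((xseq a - xseq b : S.domain) : X)‖ ≤ C₁ * ‖wseq a - wseq b‖ := hest
        _ ≤ (C₁ + 1) * ‖wseq a - wseq b‖ := by nlinarith [norm_nonneg (wseq a - wseq b)]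
        _ < (C₁ + 1) * (ε / (C₁ + 1)) := by
            apply mul_lt_mul_of_pos_left hdw (by positivity)
        _ = ε := by field_simp
    obtain ⟨l, hl⟩ := cauchySeq_tendsto_of_complete hcauchy
    obtain ⟨hldom, hlS⟩ := hgraph xseq l w hl (by
      have : (fun k => S (xseq k)) = wseq := funext hx2
      rw [this]; exact hwlim)
    refine ⟨⟨l, hldom⟩, ?_, hlS⟩
    exact (Submodule.isClosed_orthogonal N).mem_of_tendsto hl
      (Eventually.of_forall fun k => hx1 k)
  -- Step 3: each y n lies in the closure of ran S
  have hyclos : ∀ n, y n ∈ closure ((LinearMap.range S.toFun : Submodule ℂ Y) : Set Y) := by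
    intro n
    have := Submodule.orthogonal_orthogonal_eq_closure (K := (LinearMap.range S.toFun : Submodule ℂ Y))
    have hmem : y n ∈ ((LinearMap.range S.toFun : Submodule ℂ Y)ᗮ)ᗮ := by
      rw [Submodule.mem_orthogonal]
      intro z hz
      have hz' : ∀ φ : S.domain, (inner ℂ (S φ) z : ℂ) = 0 := by
        intro φ
        exact (Submodule.mem_orthogonal _ z).1 hz (S φ) (LinearMap.mem_range_self _ φ)
      have := horth n z hz'
      rw [← inner_conj_symm, this, map_zero]
    rw [this] at hmem
    exact hmem
  -- Step 4: choose preimages and conclude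
  choose x hx1 hx2 using fun n => hrange (y n) (hyclos n)
  have hybdd : ∀ n, ‖y n‖ ≤ C := fun n => le_trans (le_add_of_nonneg_right (norm_nonneg _)) (hC n)
  have hηbdd : ∀ n, ‖η n‖ ≤ C := fun n => le_trans (le_add_of_nonneg_left (norm_nonneg _)) (hC n)
  obtain ⟨g, hg, l, hl⟩ := hcpt x ⟨C₁ * C + C, by
    intro n
    have h1 : ‖(x n : X)‖ ≤ C₁ * ‖S (x n)‖ := hC₁ (x n) (hx1 n)
    rw [hx2 n] at h1
    have h2 : ‖S (x n)‖ ≤ C := by rw [hx2 n]; exact hybdd n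
    have := hybdd n
    nlinarith⟩
  refine ⟨g, hg, ?_⟩
  -- y (g n) is Cauchy
  have hxc : CauchySeq (fun n => (x (g n) : X)) := hl.cauchySeq
  have hyc : CauchySeq (fun n => y (g n)) := by
    rw [Metric.cauchySeq_iff]
    intro ε hε
    rw [Metric.cauchySeq_iff] at hxc
    obtain ⟨M, hM⟩ := hxc (ε ^ 2 / (2 * C + 1)) (by positivity)
    refine ⟨M, fun a ha b hb => ?_⟩
    have hdx := hM a ha b hb
    rw [dist_eq_norm] at hdx ⊢
    -- key identity
    have hid : ‖y (g a) - y (g b)‖ ^ 2 ≤ ‖(x (g a) : X) - (x (g b) : X)‖ * ‖η (g a) - η (g b)‖ := by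
      have e1 : y (g a) - y (g b) = S (x (g a) - x (g b)) := by
        rw [LinearPMap.map_sub, hx2, hx2]
      have e2 : (inner ℂ (y (g a) - y (g b)) (y (g a) - y (g b)) : ℂ)
          = inner ℂ (((x (g a) - x (g b) : S.domain) : X)) (η (g a) - η (g b)) := by
        nth_rewrite 1 [e1]
        rw [inner_sub_right, inner_sub_right, hadj (g a) _, hadj (g b) _, ← inner_sub_right]
      have e3 : (‖y (g a) - y (g b)‖ : ℝ) ^ 2
          = RCLike.re (inner ℂ (y (g a) - y (g b)) (y (g a) - y (g b)) : ℂ) := by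
        rw [inner_self_eq_norm_sq]
      rw [e3, e2]
      calc RCLike.re (inner ℂ (((x (g a) - x (g b) : S.domain) : X)) (η (g a) - η (g b)) : ℂ)
          ≤ ‖(inner ℂ (((x (g a) - x (g b) : S.domain) : X)) (η (g a) - η (g b)) : ℂ)‖ :=
            RCLike.re_le_norm _
        _ ≤ ‖((x (g a) - x (g b) : S.domain) : X)‖ * ‖η (g a) - η (g b)‖ := norm_inner_le_norm _ _
        _ = ‖(x (g a) : X) - (x (g b) : X)‖ * ‖η (g a) - η (g b)‖ := rfl
    have hηd : ‖η (g a) - η (g b)‖ ≤ 2 * C := by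
      calc ‖η (g a) - η (g b)‖ ≤ ‖η (g a)‖ + ‖η (g b)‖ := norm_sub_le _ _
        _ ≤ 2 * C := by linarith [hηbdd (g a), hηbdd (g b)]
    have hfin : ‖y (g a) - y (g b)‖ ^ 2 < ε ^ 2 := by
      calc ‖y (g a) - y (g b)‖ ^ 2
          ≤ ‖(x (g a) : X) - (x (g b) : X)‖ * ‖η (g a) - η (g b)‖ := hid
        _ ≤ ‖(x (g a) : X) - (x (g b) : X)‖ * (2 * C + 1) := by
            nlinarith [norm_nonneg ((x (g a) : X) - (x (g b) : X)), hηd]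
        _ < (ε ^ 2 / (2 * C + 1)) * (2 * C + 1) := by
            apply mul_lt_mul_of_pos_right hdx (by positivity)
        _ = ε ^ 2 := by field_simp
    exact lt_of_pow_lt_pow_left₀ 2 (le_of_lt hε) hfin
  obtain ⟨l', hl'⟩ := cauchySeq_tendsto_of_complete hyc
  exact ⟨l', hl'⟩
end
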